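/- arXiv:2301.08167 — 8 statements merged into one kernel-verified Lean document; each statement's English description precedes it below -/
import Mathlib

section
/- Let N ≥ 1 and let d_1, …, d_N be positive integers. Let ρ be a density matrix on the N-fold tensor product ℂ^{d_1} ⊗ ⋯ ⊗ ℂ^{d_N}, i.e. a positive semidefinite complex matrix of trace 1 whose rows and columns are indexed by the product type (Fin d_1) × ⋯ × (Fin d_N). For each x let φ_x ∈ ℂ^{d_x} be a unit vector, and let ρ_x denote the reduced density matrix of ρ on the x-th factor, obtained by the partial trace over all other factors, (ρ_x)_{i j} = Σ_{k} ρ_{(…,i,…;k),(…,j,…;k)} where the sum runs over all configurations k of the remaining indices. Then ⟨φ_1 ⊗ ⋯ ⊗ φ_N | ρ | φ_1 ⊗ ⋯ ⊗ φ_N⟩ ≤ (1/N) Σ_{x=1}^N ⟨φ_x | ρ_x | φ_x⟩. (In the paper's terminology: the global cost C_{global,pure} is bounded above by the local cost C_{local,pure}.) -/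
open scoped ComplexOrder
open Finset Matrix



lemma quad_eq_norm {n : Type*} [Fintype n] [DecidableEq n]
    {ρ A : Matrix n n ℂ} (hA : ρ = Aᴴ * A) (u : n → ℂ) :
    ∑ k, ∑ k', (starRingEnd ℂ) (u k) * ρ k k' * u k'
      = ∑ l, (Complex.normSq (A.mulVec u l) : ℂ) := by
  subst hA
  have h1 : ∀ l, (Complex.normSq (A.mulVec u l) : ℂ)
      = ∑ k, ∑ k', (starRingEnd ℂ) (u k) * ((starRingEnd ℂ) (A l k) * A l k') * u k' := by
    intro l
    rw [Complex.normSq_eq_conj_mul_self]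
    simp only [Matrix.mulVec, dotProduct, map_sum, _root_.map_mul, Finset.sum_mul_sum]
    refine Finset.sum_congr rfl fun k _ => Finset.sum_congr rfl fun k' _ => by ring
  have h2 : ∀ (k k' : n), (starRingEnd ℂ) (u k) * (Aᴴ * A) k k' * u k'
      = ∑ l, (starRingEnd ℂ) (u k) * ((starRingEnd ℂ) (A l k) * A l k') * u k' := by
    intro k k'
    simp only [Matrix.mul_apply, Matrix.conjTranspose_apply, Finset.mul_sum, Finset.sum_mul]
    exact Finset.sum_congr rfl fun l _ => by simp only [RCLike.star_def]
  simp only [h1, h2]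
  calc ∑ k, ∑ k', ∑ l, (starRingEnd ℂ) (u k) * ((starRingEnd ℂ) (A l k) * A l k') * u k'
      = ∑ k, ∑ l, ∑ k', (starRingEnd ℂ) (u k) * ((starRingEnd ℂ) (A l k) * A l k') * u k' :=
        Finset.sum_congr rfl fun k _ => Finset.sum_comm
    _ = ∑ l, ∑ k, ∑ k', (starRingEnd ℂ) (u k) * ((starRingEnd ℂ) (A l k) * A l k') * u k' :=
        Finset.sum_comm

section
variable {N : ℕ} {d : Fin N → ℕ}

lemma psi_decomp (hd : ∀ x, 0 < d x) (φ : (x : Fin N) → Fin (d x) → ℂ) (x : Fin N)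
    (k : (y : Fin N) → Fin (d y)) :
    ∏ y, φ y (k y)
      = ∑ m : (y : Fin N) → Fin (d y),
          (if m x = ⟨0, hd x⟩ then ∏ y ∈ univ.erase x, φ y (m y) else 0)
          * (if Function.update k x ⟨0, hd x⟩ = m then φ x (k x) else 0) := by
  simp only [mul_ite, mul_zero, Finset.sum_ite_eq, Finset.mem_univ, if_true,
    Function.update_self]
  have h : ∀ y ∈ univ.erase x, φ y (Function.update k x ⟨0, hd x⟩ y) = φ y (k y) :=
    fun y hy => by rw [Function.update_of_ne (Finset.mem_erase.1 hy).1]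
  rw [Finset.prod_congr rfl h, mul_comm]
  exact (Finset.mul_prod_erase univ _ (Finset.mem_univ x)).symm

end

section
variable {N : ℕ} {d : Fin N → ℕ}

lemma c_norm_one (hd : ∀ x, 0 < d x) (φ : (x : Fin N) → Fin (d x) → ℂ)
    (hφ : ∀ x, ∑ i, Complex.normSq (φ x i) = 1) (x : Fin N) :
    ∑ m : (y : Fin N) → Fin (d y),
      Complex.normSq (if m x = ⟨0, hd x⟩ then ∏ y ∈ univ.erase x, φ y (m y) else 0) = 1 := by
  classical
  set i₀ : Fin (d x) := ⟨0, hd x⟩ with hi₀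
  set h : (y : Fin N) → Fin (d y) → ℝ :=
    Function.update (fun y i => Complex.normSq (φ y i)) x (fun i => if i = i₀ then 1 else 0)
    with hh
  have h1 : ∀ m : (y : Fin N) → Fin (d y),
      Complex.normSq (if m x = i₀ then ∏ y ∈ univ.erase x, φ y (m y) else 0)
        = ∏ y, h y (m y) := by
    intro m
    rw [← Finset.mul_prod_erase univ (fun y => h y (m y)) (Finset.mem_univ x)]
    have h2 : ∀ y ∈ univ.erase x, h y (m y) = Complex.normSq (φ y (m y)) := fun y hy => by
      simp only [hh, Function.update_of_ne (Finset.mem_erase.1 hy).1]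
    rw [Finset.prod_congr rfl h2]
    have h3 : h x (m x) = if m x = i₀ then 1 else 0 := by simp [hh]
    rw [h3]
    by_cases hm : m x = i₀
    · rw [if_pos hm, if_pos hm, one_mul]
      exact (map_prod Complex.normSq _ _)
    · simp [hm]
  simp only [h1]
  rw [← Fintype.piFinset_univ, ← Finset.prod_univ_sum (fun _ => univ) h]
  refine Finset.prod_eq_one fun y _ => ?_
  by_cases hyx : y = x
  · subst hyx
    simp [hh, Finset.sum_ite_eq]
  · simp only [hh, Function.update_of_ne hyx]
    exact hφ y

end

section
variable {N : ℕ} {d : Fin N → ℕ}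

lemma loc_L1 (hd : ∀ x, 0 < d x)
    (ρ : Matrix ((x : Fin N) → Fin (d x)) ((x : Fin N) → Fin (d x)) ℂ)
    (φ : (x : Fin N) → Fin (d x) → ℂ) (x : Fin N) :
    ∑ i, ∑ j, (starRingEnd ℂ) (φ x i)
        * (∑ k : (y : Fin N) → Fin (d y), if k x = i then ρ k (Function.update k x j) else 0)
        * φ x j
      = ∑ k : (y : Fin N) → Fin (d y), ∑ j,
          (starRingEnd ℂ) (φ x (k x)) * ρ k (Function.update k x j) * φ x j := by
  simp only [Finset.mul_sum, Finset.sum_mul, mul_ite, ite_mul, zero_mul, mul_zero]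
  rw [Finset.sum_comm]
  conv_lhs => enter [2, j]; rw [Finset.sum_comm]
  simp only [Finset.sum_ite_eq, Finset.mem_univ, if_true]
  exact Finset.sum_comm

end

section
variable {N : ℕ} {d : Fin N → ℕ}

lemma loc_R1 (hd : ∀ x, 0 < d x)
    (ρ : Matrix ((x : Fin N) → Fin (d x)) ((x : Fin N) → Fin (d x)) ℂ)
    (φ : (x : Fin N) → Fin (d x) → ℂ) (x : Fin N) :
    (∑ m : (y : Fin N) → Fin (d y), ∑ k : (y : Fin N) → Fin (d y),
          ∑ k' : (y : Fin N) → Fin (d y),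
          (starRingEnd ℂ) (if Function.update k x ⟨0, hd x⟩ = m then φ x (k x) else 0)
          * ρ k k'
          * (if Function.update k' x ⟨0, hd x⟩ = m then φ x (k' x) else 0))
      = ∑ k : (y : Fin N) → Fin (d y), ∑ k' : (y : Fin N) → Fin (d y),
          if Function.update k' x ⟨0, hd x⟩ = Function.update k x ⟨0, hd x⟩
          then (starRingEnd ℂ) (φ x (k x)) * ρ k k' * φ x (k' x) else 0 := by
  rw [Finset.sum_comm]
  refine Finset.sum_congr rfl fun k _ => ?_
  rw [Finset.sum_comm]
  refine Finset.sum_congr rfl fun k' _ => ?_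
  simp only [apply_ite (starRingEnd ℂ), map_zero, ite_mul, mul_ite, zero_mul, mul_zero]
  rw [Finset.sum_ite_eq, if_pos (Finset.mem_univ _)]
  exact if_congr eq_comm rfl rfl

end

section
variable {N : ℕ} {d : Fin N → ℕ}

lemma loc_bridge (hd : ∀ x, 0 < d x)
    (ρ : Matrix ((x : Fin N) → Fin (d x)) ((x : Fin N) → Fin (d x)) ℂ)
    (φ : (x : Fin N) → Fin (d x) → ℂ) (x : Fin N) (k : (y : Fin N) → Fin (d y)) :
    ∑ j, (starRingEnd ℂ) (φ x (k x)) * ρ k (Function.update k x j) * φ x j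
      = ∑ k' : (y : Fin N) → Fin (d y),
          if Function.update k' x ⟨0, hd x⟩ = Function.update k x ⟨0, hd x⟩
          then (starRingEnd ℂ) (φ x (k x)) * ρ k k' * φ x (k' x) else 0 := by
  classical
  rw [← Finset.sum_filter]
  refine Finset.sum_bij' (fun j _ => Function.update k x j) (fun k' _ => k' x)
    ?_ ?_ ?_ ?_ ?_
  · intro j _
    simp only [Finset.mem_filter, Finset.mem_univ, true_and, Function.update_idem]
  · intro k' _; exact Finset.mem_univ _
  · intro j _; exact Function.update_self _ _ _
  · intro k' hk'
    have hcond := (Finset.mem_filter.1 hk').2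
    funext y
    by_cases hy : y = x
    · subst hy; beta_reduce; exact Function.update_self _ _ _
    · beta_reduce
      rw [Function.update_of_ne hy]
      have := congrFun hcond y
      rw [Function.update_of_ne hy, Function.update_of_ne hy] at this
      exact this.symm
  · intro j _
    beta_reduce
    rw [Function.update_self]

end

section
variable {N : ℕ} {d : Fin N → ℕ}

lemma key_ineq (hd : ∀ x, 0 < d x)
    (ρ A : Matrix ((x : Fin N) → Fin (d x)) ((x : Fin N) → Fin (d x)) ℂ)
    (hA : ρ = Aᴴ * A)
    (φ : (x : Fin N) → Fin (d x) → ℂ)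
    (hφ : ∀ x, ∑ i, Complex.normSq (φ x i) = 1)
    (hc1 : ∀ x : Fin N, ∑ m : (y : Fin N) → Fin (d y),
      Complex.normSq (if m x = ⟨0, hd x⟩ then ∏ y ∈ univ.erase x, φ y (m y) else 0) = 1)
    (x : Fin N) :
    (∑ k : (y : Fin N) → Fin (d y), ∑ k' : (y : Fin N) → Fin (d y),
        (starRingEnd ℂ) (∏ y, φ y (k y)) * ρ k k' * ∏ y, φ y (k' y)).re
      ≤ (∑ i, ∑ j, (starRingEnd ℂ) (φ x i)
          * (∑ k : (y : Fin N) → Fin (d y), if k x = i then ρ k (Function.update k x j) else 0)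
          * φ x j).re := by
  classical
  set ψ : ((y : Fin N) → Fin (d y)) → ℂ := fun k => ∏ y, φ y (k y) with hψ
  set v : ((y : Fin N) → Fin (d y)) → ((y : Fin N) → Fin (d y)) → ℂ :=
    fun m k => if Function.update k x ⟨0, hd x⟩ = m then φ x (k x) else 0 with hv
  set c : ((y : Fin N) → Fin (d y)) → ℂ :=
    fun m => if m x = ⟨0, hd x⟩ then ∏ y ∈ univ.erase x, φ y (m y) else 0 with hc
  -- global side
  have hg : (∑ k : (y : Fin N) → Fin (d y), ∑ k' : (y : Fin N) → Fin (d y),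
        (starRingEnd ℂ) (∏ y, φ y (k y)) * ρ k k' * ∏ y, φ y (k' y)).re
      = ∑ l : (y : Fin N) → Fin (d y), Complex.normSq (A.mulVec ψ l) := by
    rw [show (∑ k : (y : Fin N) → Fin (d y), ∑ k' : (y : Fin N) → Fin (d y),
        (starRingEnd ℂ) (∏ y, φ y (k y)) * ρ k k' * ∏ y, φ y (k' y))
      = ∑ k, ∑ k', (starRingEnd ℂ) (ψ k) * ρ k k' * ψ k' from rfl]
    rw [quad_eq_norm hA ψ]
    rw [Complex.re_sum]
    exact Finset.sum_congr rfl fun l _ => Complex.ofReal_re _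
  -- local side
  have hl : (∑ i, ∑ j, (starRingEnd ℂ) (φ x i)
          * (∑ k : (y : Fin N) → Fin (d y), if k x = i then ρ k (Function.update k x j) else 0)
          * φ x j).re
      = ∑ m : (y : Fin N) → Fin (d y), ∑ l : (y : Fin N) → Fin (d y),
          Complex.normSq (A.mulVec (v m) l) := by
    rw [loc_L1 hd ρ φ x]
    rw [Finset.sum_congr rfl fun k _ => loc_bridge hd ρ φ x k]
    rw [← loc_R1 hd ρ φ x]
    rw [Finset.sum_congr rfl fun m _ => quad_eq_norm hA (v m)]
    rw [Complex.re_sum]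
    refine Finset.sum_congr rfl fun m _ => ?_
    rw [Complex.re_sum]
    exact Finset.sum_congr rfl fun l _ => Complex.ofReal_re _
  rw [hg, hl, Finset.sum_comm]
  refine Finset.sum_le_sum fun l _ => ?_
  -- Cauchy-Schwarz at coordinate l
  have hAv : A.mulVec ψ l = ∑ m, c m * A.mulVec (v m) l := by
    simp only [Matrix.mulVec, dotProduct]
    have : ∀ k, A l k * ψ k = ∑ m, c m * (A l k * v m k) := by
      intro k
      rw [hψ]
      simp only []
      rw [psi_decomp hd φ x k]
      rw [Finset.mul_sum]
      exact Finset.sum_congr rfl fun m _ => by rw [hc, hv]; ring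
    rw [Finset.sum_congr rfl fun k _ => this k, Finset.sum_comm]
    exact Finset.sum_congr rfl fun m _ => by rw [Finset.mul_sum]
  rw [hAv]
  calc Complex.normSq (∑ m, c m * A.mulVec (v m) l)
      = ‖∑ m, c m * A.mulVec (v m) l‖ ^ 2 := (Complex.sq_norm _).symm
    _ ≤ (∑ m, ‖c m‖ * ‖A.mulVec (v m) l‖) ^ 2 := by
        refine pow_le_pow_left₀ (norm_nonneg _) ?_ 2
        refine le_trans (norm_sum_le _ _) (le_of_eq ?_)
        exact Finset.sum_congr rfl fun m _ => norm_mul _ _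
    _ ≤ (∑ m, ‖c m‖ ^ 2) * ∑ m, ‖A.mulVec (v m) l‖ ^ 2 :=
        Finset.sum_mul_sq_le_sq_mul_sq _ _ _
    _ = (∑ m, Complex.normSq (c m)) * ∑ m, Complex.normSq (A.mulVec (v m) l) := by
        rw [Finset.sum_congr rfl fun m _ => Complex.sq_norm (c m),
          Finset.sum_congr rfl fun m _ => Complex.sq_norm (A.mulVec (v m) l)]
    _ = ∑ m, Complex.normSq (A.mulVec (v m) l) := by rw [hc1 x, one_mul]

end

open scoped MatrixOrder in
lemma psd_exists_aux {n : Type*} [Fintype n] [DecidableEq n] {ρ : Matrix n n ℂ}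
    (h : ρ.PosSemidef) : ∃ A : Matrix n n ℂ, ρ = Aᴴ * A := by
  obtain ⟨B, hB⟩ := CStarAlgebra.nonneg_iff_eq_star_mul_self.mp h.nonneg
  exact ⟨B, hB⟩

/-- **Global cost is bounded by local cost.**
For a density matrix `ρ` on the `N`-fold tensor product `ℂ^{d 1} ⊗ ⋯ ⊗ ℂ^{d N}`
(indexed by the product type `(x : Fin N) → Fin (d x)`), unit vectors `φ x`,
and reduced density matrices `M x` (obtained from `ρ` by tracing out all factors
other than the `x`-th), the global fidelity `⟨⊗φ | ρ | ⊗φ⟩` is at most the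
average of the local fidelities `⟨φ x | M x | φ x⟩`. -/
theorem global_cost_le_local_cost
    (N : ℕ) (hN : 1 ≤ N) (d : Fin N → ℕ) (hd : ∀ x, 0 < d x)
    (ρ : Matrix ((x : Fin N) → Fin (d x)) ((x : Fin N) → Fin (d x)) ℂ)
    (hρ : ρ.PosSemidef) (htr : ρ.trace = 1)
    (φ : (x : Fin N) → Fin (d x) → ℂ)
    (hφ : ∀ x, ∑ i, Complex.normSq (φ x i) = 1)
    (M : (x : Fin N) → Matrix (Fin (d x)) (Fin (d x)) ℂ)
    (hM : ∀ (x : Fin N) (i j : Fin (d x)), M x i j =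
      ∑ k : (y : Fin N) → Fin (d y),
        if k x = i then ρ k (Function.update k x j) else 0) :
    (∑ k : (y : Fin N) → Fin (d y), ∑ k' : (y : Fin N) → Fin (d y),
        (starRingEnd ℂ) (∏ y, φ y (k y)) * ρ k k' * ∏ y, φ y (k' y)).re
      ≤ (1 / N) * ∑ x, (∑ i, ∑ j, (starRingEnd ℂ) (φ x i) * M x i j * φ x j).re := by
  classical
  obtain ⟨A, hA⟩ := psd_exists_aux hρ
  have hkey : ∀ x : Fin N,
      (∑ k : (y : Fin N) → Fin (d y), ∑ k' : (y : Fin N) → Fin (d y),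
        (starRingEnd ℂ) (∏ y, φ y (k y)) * ρ k k' * ∏ y, φ y (k' y)).re
      ≤ (∑ i, ∑ j, (starRingEnd ℂ) (φ x i) * M x i j * φ x j).re := by
    intro x
    have := key_ineq hd ρ A hA φ hφ (fun x => c_norm_one hd φ hφ x) x
    refine le_trans this (le_of_eq ?_)
    congr 1
    refine Finset.sum_congr rfl fun i _ => Finset.sum_congr rfl fun j _ => ?_
    rw [hM x i j]
  have hNpos : (0:ℝ) < N := by exact_mod_cast Nat.lt_of_lt_of_le Nat.zero_lt_one hN
  calc (∑ k : (y : Fin N) → Fin (d y), ∑ k' : (y : Fin N) → Fin (d y),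
        (starRingEnd ℂ) (∏ y, φ y (k y)) * ρ k k' * ∏ y, φ y (k' y)).re
      = (1 / N) * ∑ _x : Fin N,
          (∑ k : (y : Fin N) → Fin (d y), ∑ k' : (y : Fin N) → Fin (d y),
            (starRingEnd ℂ) (∏ y, φ y (k y)) * ρ k k' * ∏ y, φ y (k' y)).re := by
        rw [Finset.sum_const, Finset.card_univ, Fintype.card_fin, nsmul_eq_mul]
        field_simp
    _ ≤ (1 / N) * ∑ x, (∑ i, ∑ j, (starRingEnd ℂ) (φ x i) * M x i j * φ x j).re := by
        refine mul_le_mul_of_nonneg_left (Finset.sum_le_sum fun x _ => hkey x) ?_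
        positivity
end

section
/- Let ρ be a positive semidefinite complex matrix indexed by (Fin m × Fin n) × (Fin m × Fin n), and let tr_B ρ be its partial trace over the second factor, defined by (tr_B ρ)_{i j} = Σ_{k ∈ Fin n} ρ_{(i,k),(j,k)}. Then for every unit vector φ ∈ ℂ^m and every unit vector χ ∈ ℂ^n, ⟨φ ⊗ χ | ρ | φ ⊗ χ⟩ ≤ ⟨φ | tr_B ρ | φ⟩, where (φ ⊗ χ)_{(i,k)} = φ_i χ_k. -/
open scoped ComplexOrder

private lemma cs_aux {n : ℕ} (a b : Fin n → ℂ) :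
    Complex.normSq (∑ k, a k * b k) ≤
      (∑ k, Complex.normSq (a k)) * (∑ k, Complex.normSq (b k)) := by
  have h1 : ‖∑ k, a k * b k‖ ≤ ∑ k, ‖a k‖ * ‖b k‖ := by
    simpa [norm_mul] using
      norm_sum_le (E := ℂ) Finset.univ (fun k => a k * b k)
  have h2 := Finset.sum_mul_sq_le_sq_mul_sq Finset.univ
      (fun k => ‖a k‖) (fun k => ‖b k‖)
  calc Complex.normSq (∑ k, a k * b k)
      = (‖∑ k, a k * b k‖) ^ 2 := (Complex.sq_norm _).symm
    _ ≤ (∑ k, ‖a k‖ * ‖b k‖) ^ 2 :=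
        pow_le_pow_left₀ (norm_nonneg _) h1 2
    _ ≤ (∑ k, ‖a k‖ ^ 2) * (∑ k, ‖b k‖ ^ 2) := h2
    _ = (∑ k, Complex.normSq (a k)) * (∑ k, Complex.normSq (b k)) := by
        simp [Complex.sq_norm]

private lemma sum_comm3 {α β γ M : Type*} [Fintype α] [Fintype β] [Fintype γ]
    [AddCommMonoid M] (F : α → β → γ → M) :
    ∑ p, ∑ q, ∑ r, F p q r = ∑ r, ∑ p, ∑ q, F p q r := by
  calc ∑ p, ∑ q, ∑ r, F p q r
      = ∑ p, ∑ r, ∑ q, F p q r :=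
        Finset.sum_congr rfl fun p _ => Finset.sum_comm
    _ = ∑ r, ∑ p, ∑ q, F p q r := Finset.sum_comm

private lemma sum_comm4 {α β γ δ M : Type*} [Fintype α] [Fintype β] [Fintype γ] [Fintype δ]
    [AddCommMonoid M] (F : α → β → γ → δ → M) :
    ∑ i, ∑ j, ∑ k, ∑ r, F i j k r = ∑ r, ∑ k, ∑ i, ∑ j, F i j k r := by
  calc ∑ i, ∑ j, ∑ k, ∑ r, F i j k r
      = ∑ i, ∑ j, ∑ r, ∑ k, F i j k r :=
        Finset.sum_congr rfl fun i _ => Finset.sum_congr rfl fun j _ => Finset.sum_comm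
    _ = ∑ i, ∑ r, ∑ j, ∑ k, F i j k r :=
        Finset.sum_congr rfl fun i _ => Finset.sum_comm
    _ = ∑ r, ∑ i, ∑ j, ∑ k, F i j k r := Finset.sum_comm
    _ = ∑ r, ∑ i, ∑ k, ∑ j, F i j k r :=
        Finset.sum_congr rfl fun r _ => Finset.sum_congr rfl fun i _ => Finset.sum_comm
    _ = ∑ r, ∑ k, ∑ i, ∑ j, F i j k r :=
        Finset.sum_congr rfl fun r _ => Finset.sum_comm

/-- **Data processing under partial trace, pure-state case.**
For a positive semidefinite `ρ` on `ℂ^m ⊗ ℂ^n` (indexed by `Fin m × Fin n`),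
with partial trace `trB` over the second factor, and unit vectors `φ`, `χ`,
we have `⟨φ ⊗ χ | ρ | φ ⊗ χ⟩ ≤ ⟨φ | trB ρ | φ⟩`. -/
theorem tensor_qform_le_partial_trace_qform
    (m n : ℕ) (ρ : Matrix (Fin m × Fin n) (Fin m × Fin n) ℂ)
    (hρ : ρ.PosSemidef)
    (trB : Matrix (Fin m) (Fin m) ℂ)
    (htrB : ∀ i j, trB i j = ∑ k : Fin n, ρ (i, k) (j, k))
    (φ : Fin m → ℂ) (hφ : ∑ i, Complex.normSq (φ i) = 1)
    (χ : Fin n → ℂ) (hχ : ∑ k, Complex.normSq (χ k) = 1) :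
    (∑ p : Fin m × Fin n, ∑ q : Fin m × Fin n,
        (starRingEnd ℂ) (φ p.1 * χ p.2) * ρ p q * (φ q.1 * χ q.2)).re
      ≤ (∑ i, ∑ j, (starRingEnd ℂ) (φ i) * trB i j * φ j).re := by
  obtain ⟨C, hC⟩ : ∃ C : Matrix (Fin m × Fin n) (Fin m × Fin n) ℂ, ρ = C.conjTranspose * C := by
    open scoped MatrixOrder in
    exact CStarAlgebra.nonneg_iff_eq_star_mul_self.mp hρ.nonneg
  have hρ' : ∀ p q, ρ p q = ∑ r, (starRingEnd ℂ) (C r p) * C r q := by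
    intro p q
    simp [hC, Matrix.mul_apply, Matrix.conjTranspose_apply]
  set g : (Fin m × Fin n) → Fin n → ℂ :=
    fun r k => ∑ i, C r (i, k) * φ i with hg
  set f : (Fin m × Fin n) → ℂ := fun r => ∑ k, g r k * χ k with hf
  have hfr : ∀ r, f r = ∑ q : Fin m × Fin n, C r q * (φ q.1 * χ q.2) := by
    intro r
    rw [hf]
    simp only [hg]
    rw [Fintype.sum_prod_type, Finset.sum_comm]
    refine Finset.sum_congr rfl fun k _ => ?_
    rw [Finset.sum_mul]
    exact Finset.sum_congr rfl fun i _ => by ring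
  -- LHS equals ∑ r, conj (f r) * f r
  have hL : (∑ p : Fin m × Fin n, ∑ q : Fin m × Fin n,
        (starRingEnd ℂ) (φ p.1 * χ p.2) * ρ p q * (φ q.1 * χ q.2))
      = ∑ r, ((starRingEnd ℂ) (f r) * f r) := by
    simp_rw [hρ', Finset.mul_sum, Finset.sum_mul]
    rw [sum_comm3]
    refine Finset.sum_congr rfl fun r _ => ?_
    rw [hfr, map_sum, Finset.sum_mul_sum]
    refine Finset.sum_congr rfl fun p _ => Finset.sum_congr rfl fun q _ => ?_
    simp only [map_mul]
    ring
  -- RHS equals ∑ r, ∑ k, conj (g r k) * g r k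
  have hR : (∑ i, ∑ j, (starRingEnd ℂ) (φ i) * trB i j * φ j)
      = ∑ r, ∑ k, ((starRingEnd ℂ) (g r k) * g r k) := by
    simp_rw [htrB, hρ', Finset.mul_sum, Finset.sum_mul]
    rw [sum_comm4]
    refine Finset.sum_congr rfl fun r _ => Finset.sum_congr rfl fun k _ => ?_
    simp only [hg]
    rw [map_sum, Finset.sum_mul_sum]
    refine Finset.sum_congr rfl fun i _ => Finset.sum_congr rfl fun j _ => ?_
    simp only [map_mul]
    ring
  rw [hL, hR]
  have hre : ∀ z : ℂ, ((starRingEnd ℂ) z * z).re = Complex.normSq z := by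
    intro z
    rw [mul_comm, Complex.mul_conj, Complex.ofReal_re]
  simp only [Complex.re_sum, hre]
  refine Finset.sum_le_sum fun r _ => ?_
  calc Complex.normSq (f r) ≤
      (∑ k, Complex.normSq (g r k)) * (∑ k, Complex.normSq (χ k)) := cs_aux _ _
    _ = ∑ k, Complex.normSq (g r k) := by rw [hχ, mul_one]
end

section
/- (No perfect quantum multiplication.) Let a ∈ ℝ with a ∉ {0, 1, −1}, and let I ⊆ ℝ be an open set containing the points 0, π/2, π and 3π/2. Then there is no ℂ-linear map T : Matrix (Fin 2) (Fin 2) ℂ → Matrix (Fin 2) (Fin 2) ℂ such that T(ρ_θ) = ρ_{aθ} for all θ ∈ I. (In particular no quantum channel can implement θ ↦ aθ on relative phases, since every channel is linear.) -/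
/-- Derivative of a two-term exponential combination, stated as a function
equation in a shape that can be iterated. -/
lemma exp_comb_deriv (p q r b c : ℂ) :
    deriv (fun θ : ℝ => p + q * Complex.exp (b * θ) + r * Complex.exp (c * θ)) =
      fun θ : ℝ => 0 + (q * b) * Complex.exp (b * θ) + (r * c) * Complex.exp (c * θ) := by
  funext θ
  have hb : HasDerivAt (fun θ : ℝ => Complex.exp (b * θ)) (b * Complex.exp (b * θ)) θ := by
    have := (((hasDerivAt_id (θ : ℂ)).const_mul b).cexp).comp_ofReal
    simpa [mul_comm] using this
  have hc : HasDerivAt (fun θ : ℝ => Complex.exp (c * θ)) (c * Complex.exp (c * θ)) θ := by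
    have := (((hasDerivAt_id (θ : ℂ)).const_mul c).cexp).comp_ofReal
    simpa [mul_comm] using this
  have h : HasDerivAt (fun θ : ℝ => p + q * Complex.exp (b * θ) + r * Complex.exp (c * θ))
      (q * (b * Complex.exp (b * θ)) + r * (c * Complex.exp (c * θ))) θ := by
    have h' : HasDerivAt (fun θ : ℝ => p + q * Complex.exp (b * θ) + r * Complex.exp (c * θ))
        (0 + q * (b * Complex.exp (b * θ)) + r * (c * Complex.exp (c * θ))) θ :=
      ((hasDerivAt_const θ p).add (hb.const_mul q)).add (hc.const_mul r)
    rw [zero_add] at h'; exact h'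
  rw [h.deriv]; ring

/-- The equatorial qubit state `ρ_θ = |θ⟩⟨θ|` with `|θ⟩ = (e₀ + e^{iθ} e₁)/√2`. -/
noncomputable def equatorialState (θ : ℝ) : Matrix (Fin 2) (Fin 2) ℂ :=
  !![1 / 2, Complex.exp (-(θ : ℂ) * Complex.I) / 2;
     Complex.exp ((θ : ℂ) * Complex.I) / 2, 1 / 2]

/-- The equatorial state decomposes as a fixed linear combination of three fixed
matrices, with coefficients `1`, `e^{-iθ}`, `e^{iθ}`. -/
lemma equatorialState_decomp (θ : ℝ) :
    equatorialState θ =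
      !![(1:ℂ)/2, 0; 0, 1/2] +
        Complex.exp ((-Complex.I) * θ) • !![(0:ℂ), 1/2; 0, 0] +
        Complex.exp (Complex.I * θ) • !![(0:ℂ), 0; 1/2, 0] := by
  ext i j
  fin_cases i <;> fin_cases j <;>
    simp [equatorialState, Matrix.smul_apply] <;> ring_nf

/-- **No perfect quantum multiplication.**
For `a ∉ {0, 1, -1}` and an open set `S ⊆ ℝ` containing `0, π/2, π, 3π/2`,
there is no `ℂ`-linear map on `2×2` matrices sending `ρ_θ` to `ρ_{aθ}` for all
`θ ∈ S`. -/
theorem no_perfect_quantum_multiplication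
    (a : ℝ) (ha0 : a ≠ 0) (ha1 : a ≠ 1) (haneg1 : a ≠ -1)
    (S : Set ℝ) (hS : IsOpen S)
    (h0 : (0 : ℝ) ∈ S) (h1 : Real.pi / 2 ∈ S) (h2 : Real.pi ∈ S)
    (h3 : 3 * Real.pi / 2 ∈ S) :
    ¬ ∃ T : Matrix (Fin 2) (Fin 2) ℂ →ₗ[ℂ] Matrix (Fin 2) (Fin 2) ℂ,
        ∀ θ ∈ S, T (equatorialState θ) = equatorialState (a * θ) := by
  rintro ⟨T, hT⟩
  set p : ℂ := T !![(1:ℂ)/2, 0; 0, 1/2] 0 1 with hp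
  set q : ℂ := T !![(0:ℂ), 1/2; 0, 0] 0 1 with hq
  set r : ℂ := T !![(0:ℂ), 0; 1/2, 0] 0 1 with hr
  -- On `S`, the (0,1) entry of `T ρ_θ` is an exponential combination equal to `e^{-iaθ}/2`.
  have key : ∀ θ ∈ S,
      (fun θ : ℝ => p + q * Complex.exp ((-Complex.I) * θ) + r * Complex.exp (Complex.I * θ)) θ
        = (fun θ : ℝ => 0 + (1/2 : ℂ) * Complex.exp ((-(a:ℂ) * Complex.I) * θ)
            + 0 * Complex.exp ((0:ℂ) * θ)) θ := by
    intro θ hθ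
    have h := hT θ hθ
    rw [equatorialState_decomp θ, map_add, map_add, map_smul, map_smul] at h
    have h01 : (T !![(1:ℂ)/2, 0; 0, 1/2]
        + Complex.exp ((-Complex.I) * θ) • T !![(0:ℂ), 1/2; 0, 0]
        + Complex.exp (Complex.I * θ) • T !![(0:ℂ), 0; 1/2, 0]) 0 1
        = equatorialState (a * θ) 0 1 := by rw [h]
    have hval : equatorialState (a * θ) 0 1 = Complex.exp ((-(a:ℂ) * Complex.I) * θ) / 2 := by
      simp [equatorialState]
      ring_nf
    rw [hval] at h01
    simp only [Matrix.add_apply, Matrix.smul_apply, smul_eq_mul] at h01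
    simp only []
    rw [hp, hq, hr]; linear_combination h01
  -- The two functions agree in a neighbourhood of `0`, hence so do all their derivatives.
  have hfg : (fun θ : ℝ => p + q * Complex.exp ((-Complex.I) * θ)
        + r * Complex.exp (Complex.I * θ))
      =ᶠ[nhds (0:ℝ)] (fun θ : ℝ => 0 + (1/2 : ℂ) * Complex.exp ((-(a:ℂ) * Complex.I) * θ)
        + 0 * Complex.exp ((0:ℂ) * θ)) :=
    Filter.eventuallyEq_of_mem (hS.mem_nhds h0) key
  have d1 := hfg.deriv
  rw [exp_comb_deriv, exp_comb_deriv] at d1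
  have d2 := d1.deriv
  rw [exp_comb_deriv, exp_comb_deriv] at d2
  have d3 := d2.deriv
  rw [exp_comb_deriv, exp_comb_deriv] at d3
  -- Evaluate the first and third derivatives at `0`.
  have E1 := d1.eq_of_nhds
  have E3 := d3.eq_of_nhds
  simp only [Complex.ofReal_zero, mul_zero, Complex.exp_zero, mul_one, zero_add, zero_mul,
    add_zero] at E1 E3
  have hI : Complex.I * Complex.I = -1 := Complex.I_mul_I
  -- Together they force `a³ = a`.
  have hca : ((a:ℂ))^3 = a := by
    linear_combination (2*Complex.I) * E1 + (2*Complex.I) * E3 -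
      ((2*(r-q) + (a:ℂ)) + (2*(r-q) + (a:ℂ)^3) * (Complex.I^2 - 1)) * hI
  have hra : a^3 = a := by exact_mod_cast hca
  have hfac : a * ((a - 1) * (a + 1)) = 0 := by linear_combination hra
  rcases mul_eq_zero.mp hfac with h | h
  · exact ha0 h
  · rcases mul_eq_zero.mp h with h' | h'
    · exact ha1 (by linarith)
    · exact haneg1 (by linarith)
end

section
/- (No cloning.) Let d ≥ 2. There is no unitary matrix U indexed by (Fin d × Fin d) × (Fin d × Fin d) over ℂ and unit vector e ∈ ℂ^d such that for every unit vector φ ∈ ℂ^d there exists α ∈ ℝ with U · (φ ⊗ e) = e^{iα} · (φ ⊗ φ), where (ψ ⊗ χ)_{(i,j)} = ψ_i χ_j. -/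
open Matrix

/-- **No cloning.**
For `d ≥ 2` there is no unitary matrix `U` on `ℂ^d ⊗ ℂ^d` and unit vector
`e ∈ ℂ^d` such that for every unit vector `φ ∈ ℂ^d` there is a phase `α` with
`U (φ ⊗ e) = e^{iα} (φ ⊗ φ)`. -/
theorem no_cloning (d : ℕ) (hd : 2 ≤ d) :
    ¬ ∃ (U : Matrix (Fin d × Fin d) (Fin d × Fin d) ℂ) (e : Fin d → ℂ),
        Uᴴ * U = 1 ∧ (∑ i, Complex.normSq (e i)) = 1 ∧
        ∀ φ : Fin d → ℂ, (∑ i, Complex.normSq (φ i)) = 1 →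
          ∃ α : ℝ, U.mulVec (fun p => φ p.1 * e p.2)
            = fun p => Complex.exp (Complex.I * (α : ℂ)) * (φ p.1 * φ p.2) := by
  rintro ⟨U, e, hU, he, hclone⟩
  set i0 : Fin d := ⟨0, by omega⟩
  set i1 : Fin d := ⟨1, by omega⟩
  have hne : i0 ≠ i1 := by simp [i0, i1, Fin.ext_iff]
  set r : ℝ := (Real.sqrt 2)⁻¹ with hr
  have hr2 : r * r = 2⁻¹ := by
    rw [hr, ← mul_inv, Real.mul_self_sqrt (by norm_num)]
  have hrpos : 0 < r := by positivity
  set φ1 : Fin d → ℂ := fun i => if i = i0 then 1 else 0 with hφ1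
  set φ2 : Fin d → ℂ := fun i => if i = i0 then (r : ℂ) else if i = i1 then (r : ℂ) else 0 with hφ2
  -- unit norms
  have hn1 : (∑ i, Complex.normSq (φ1 i)) = 1 := by
    simp [hφ1, apply_ite Complex.normSq, Finset.sum_ite_eq']
  have hn2 : (∑ i, Complex.normSq (φ2 i)) = 1 := by
    have : ∀ i, Complex.normSq (φ2 i)
        = (if i = i0 then (2⁻¹:ℝ) else 0) + (if i = i1 then (2⁻¹:ℝ) else 0) := by
      intro i
      simp only [hφ2]
      split_ifs with h h' <;> simp_all [Complex.normSq_ofReal, hr2]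
    simp [this, Finset.sum_add_distrib, Finset.sum_ite_eq']
    norm_num
  -- unitary preserves inner products
  have key : ∀ x y : Fin d × Fin d → ℂ,
      star (U.mulVec x) ⬝ᵥ U.mulVec y = star x ⬝ᵥ y := by
    intro x y
    rw [star_mulVec, dotProduct_mulVec, vecMul_vecMul, hU, vecMul_one]
  obtain ⟨α, hα⟩ := hclone φ1 hn1
  obtain ⟨β, hβ⟩ := hclone φ2 hn2
  set c1 : ℂ := Complex.exp (Complex.I * (α : ℂ))
  set c2 : ℂ := Complex.exp (Complex.I * (β : ℂ))
  have hkey := key (fun p => φ1 p.1 * e p.2) (fun p => φ2 p.1 * e p.2)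
  rw [hα, hβ] at hkey
  -- compute inner products
  have hS : (∑ i, (starRingEnd ℂ) (φ1 i) * φ2 i) = (r : ℂ) := by
    have h : ∀ i : Fin d, (starRingEnd ℂ) (φ1 i) * φ2 i = if i = i0 then (r:ℂ) else 0 := by
      intro i
      simp only [hφ1, hφ2]
      split_ifs with h h' <;> simp_all
    rw [Finset.sum_congr rfl fun i _ => h i, Finset.sum_ite_eq']
    simp
  have hE : (∑ j, (starRingEnd ℂ) (e j) * e j) = 1 := by
    have : ∀ j, (starRingEnd ℂ) (e j) * e j = ((Complex.normSq (e j) : ℝ) : ℂ) := by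
      intro j; rw [mul_comm, Complex.mul_conj]
    rw [Finset.sum_congr rfl fun j _ => this j, ← Complex.ofReal_sum, he, Complex.ofReal_one]
  have hRHS : star (fun p : Fin d × Fin d => φ1 p.1 * e p.2)
      ⬝ᵥ (fun p => φ2 p.1 * e p.2) = (r : ℂ) := by
    simp only [dotProduct, Pi.star_apply, RCLike.star_def, Fintype.sum_prod_type]
    calc (∑ i, ∑ j, (starRingEnd ℂ) (φ1 i * e j) * (φ2 i * e j))
        = (∑ i, (starRingEnd ℂ) (φ1 i) * φ2 i) * (∑ j, (starRingEnd ℂ) (e j) * e j) := by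
          rw [Finset.sum_mul_sum]
          exact Finset.sum_congr rfl fun i _ => Finset.sum_congr rfl fun j _ => by
            simp [_root_.map_mul]; ring
      _ = (r : ℂ) := by rw [hS, hE, mul_one]
  have hLHS : star (fun p : Fin d × Fin d => c1 * (φ1 p.1 * φ1 p.2))
      ⬝ᵥ (fun p => c2 * (φ2 p.1 * φ2 p.2))
      = (starRingEnd ℂ) c1 * c2 * ((r : ℂ) * (r : ℂ)) := by
    simp only [dotProduct, Pi.star_apply, RCLike.star_def, Fintype.sum_prod_type]
    calc (∑ i, ∑ j, (starRingEnd ℂ) (c1 * (φ1 i * φ1 j)) * (c2 * (φ2 i * φ2 j)))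
        = ∑ i, ∑ j, ((starRingEnd ℂ) c1 * c2) *
            (((starRingEnd ℂ) (φ1 i) * φ2 i) * ((starRingEnd ℂ) (φ1 j) * φ2 j)) := by
          exact Finset.sum_congr rfl fun i _ => Finset.sum_congr rfl fun j _ => by
            simp [_root_.map_mul]; ring
      _ = ((starRingEnd ℂ) c1 * c2) *
            ((∑ i, (starRingEnd ℂ) (φ1 i) * φ2 i) * (∑ j, (starRingEnd ℂ) (φ1 j) * φ2 j)) := by
          rw [Finset.sum_mul_sum]
          simp [Finset.mul_sum]
      _ = (starRingEnd ℂ) c1 * c2 * ((r : ℂ) * (r : ℂ)) := by rw [hS]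
  rw [hLHS, hRHS] at hkey
  -- take absolute values
  have habs := congrArg (‖·‖) hkey
  have hc1 : ‖c1‖ = 1 := by
    simp [c1, Complex.norm_exp]
  have hc2 : ‖c2‖ = 1 := by
    simp [c2, Complex.norm_exp]
  rw [norm_mul, norm_mul, norm_mul, Complex.norm_conj, hc1, hc2,
    Complex.norm_real, Real.norm_eq_abs, abs_of_pos hrpos] at habs
  -- habs : 1 * 1 * (r * r) = r
  rw [one_mul, one_mul, hr2] at habs
  -- 2⁻¹ = r, i.e. √2 = 2
  have : Real.sqrt 2 = 2 := by
    field_simp [hr] at habs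
    nlinarith [Real.sq_sqrt (by norm_num : (2:ℝ) ≥ 0), Real.sqrt_nonneg 2, habs]
  nlinarith [Real.sq_sqrt (by norm_num : (2:ℝ) ≥ 0), this]
end

section
/- Let T ≥ 2, z : Fin T → ℂ, μ = (1/T)·Σ_t z_t, and p ∈ [0,1]. Then Σ over all nonempty subsets M ⊆ Fin T of p^{|M|}(1−p)^{T−|M|} · |(1/|M|)·Σ_{t∈M} z_t − μ|² = (Σ_t |z_t − μ|²) · ( Σ_{n=1}^{T} p^n (1−p)^{T−n} C(T−1, n−1)/n² − Σ_{n=2}^{T} p^n (1−p)^{T−n} C(T−2, n−2)/n² ), where C(·,·) denotes the binomial coefficient. (Probabilistically: this is the expectation of the squared deviation of the sample mean over a random subset M in which each element of Fin T is included independently with probability p, on the event M ≠ ∅.) -/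
open Finset

lemma count_aux {α : Type*} [DecidableEq α] [Fintype α] (A : Finset α) (F : ℕ → ℝ) :
    ∑ M ∈ (univ : Finset α).powerset, (if A ⊆ M then F M.card else 0)
    = ∑ j ∈ range ((Fintype.card α - A.card) + 1),
        ((Fintype.card α - A.card).choose j : ℝ) * F (j + A.card) := by
  rw [← sum_filter]
  have h1 : ∑ M ∈ (univ : Finset α).powerset.filter (fun M => A ⊆ M), F M.card
      = ∑ N ∈ ((univ : Finset α) \ A).powerset, F (N.card + A.card) := by
    refine sum_nbij' (fun M => M \ A) (fun N => N ∪ A) ?_ ?_ ?_ ?_ ?_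
    · intro M hM
      simp only [mem_filter, mem_powerset] at hM ⊢
      exact sdiff_subset_sdiff hM.1 (Finset.Subset.refl A)
    · intro N hN
      simp only [mem_filter, mem_powerset] at hN ⊢
      exact ⟨subset_univ _, subset_union_right⟩
    · intro M hM
      simp only [mem_filter, mem_powerset] at hM
      exact sdiff_union_of_subset hM.2
    · intro N hN
      simp only [mem_powerset] at hN
      have hd : Disjoint N A := disjoint_of_subset_left hN sdiff_disjoint
      show (N ∪ A) \ A = N
      rw [union_sdiff_right, sdiff_eq_self_of_disjoint hd]
    · intro M hM
      simp only [mem_filter, mem_powerset] at hM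
      rw [card_sdiff_add_card_eq_card hM.2]
  rw [h1, sum_powerset]
  have hc : ((univ : Finset α) \ A).card = Fintype.card α - A.card := by
    rw [card_sdiff_of_subset (subset_univ A), card_univ]
  rw [hc]
  refine Finset.sum_congr rfl fun j hj => ?_
  have h2 : ∀ N ∈ powersetCard j (univ \ A), F (N.card + A.card) = F (j + A.card) := by
    intro N hN
    rw [mem_powersetCard] at hN
    rw [hN.2]
  rw [Finset.sum_congr rfl h2, Finset.sum_const, nsmul_eq_mul, card_powersetCard, hc]

-- swap lemma
lemma swap_aux {α : Type*} [DecidableEq α] [Fintype α] (F : Finset α → α → ℝ) :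
    ∑ M ∈ (univ : Finset α).powerset, ∑ s ∈ M, F M s
    = ∑ s : α, ∑ M ∈ (univ : Finset α).powerset, (if s ∈ M then F M s else 0) := by
  rw [Finset.sum_comm]
  refine Finset.sum_congr rfl fun M _ => ?_
  rw [Finset.sum_ite_mem, univ_inter]

lemma ite_sum_zero {α : Type*} (c : Prop) [Decidable c] (s : Finset α) (f : α → ℝ) :
    (if c then ∑ x ∈ s, f x else 0) = ∑ x ∈ s, (if c then f x else 0) := by
  split_ifs <;> simp

/-- **Expected squared deviation of the sample mean over a `p`-random subset.**
For `z : Fin T → ℂ` with mean `μ` and `p ∈ [0,1]`,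
`Σ_{∅ ≠ M ⊆ Fin T} p^{|M|}(1−p)^{T−|M|} |(1/|M|) Σ_{t∈M} z_t − μ|²
  = (Σ_t |z_t − μ|²) (Σ_{n=1}^T p^n (1−p)^{T−n} C(T−1,n−1)/n²
      − Σ_{n=2}^T p^n (1−p)^{T−n} C(T−2,n−2)/n²)`. -/
theorem random_subset_mean_variance (T : ℕ) (hT : 2 ≤ T) (z : Fin T → ℂ)
    (μ : ℂ) (hμ : μ = (∑ t, z t) / (T : ℂ))
    (p : ℝ) (hp0 : 0 ≤ p) (hp1 : p ≤ 1) :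
    ∑ M ∈ (Finset.univ : Finset (Fin T)).powerset.filter (fun M => M.Nonempty),
        p ^ M.card * (1 - p) ^ (T - M.card) *
          ‖(∑ t ∈ M, z t) / (M.card : ℂ) - μ‖ ^ 2
      = (∑ t, ‖z t - μ‖ ^ 2) *
          ((∑ n ∈ Finset.Icc 1 T,
              p ^ n * (1 - p) ^ (T - n) * ((T - 1).choose (n - 1) : ℝ) / (n ^ 2 : ℝ))
            - (∑ n ∈ Finset.Icc 2 T,
              p ^ n * (1 - p) ^ (T - n) * ((T - 2).choose (n - 2) : ℝ) / (n ^ 2 : ℝ))) := by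
  classical
  have hT0 : (T : ℂ) ≠ 0 := by
    simp only [ne_eq, Nat.cast_eq_zero]; omega
  set w : Fin T → ℂ := fun t => z t - μ with hwdef
  have hsum : ∑ t, w t = 0 := by
    simp only [hwdef, Finset.sum_sub_distrib, Finset.sum_const, Finset.card_univ,
      Fintype.card_fin, nsmul_eq_mul, hμ, sub_eq_zero]
    field_simp
  set K : ℕ → ℝ := fun n => p ^ n * (1 - p) ^ (T - n) / (n : ℝ) ^ 2 with hKdef
  set h : Fin T → Fin T → ℝ := fun s t => (w s * (starRingEnd ℂ) (w t)).re with hhdef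
  -- normSq expansion
  have hns : ∀ M : Finset (Fin T), Complex.normSq (∑ t ∈ M, w t)
      = ∑ s ∈ M, ∑ t ∈ M, h s t := by
    intro M
    have : (∑ s ∈ M, w s) * (starRingEnd ℂ) (∑ t ∈ M, w t)
        = ∑ s ∈ M, ∑ t ∈ M, w s * (starRingEnd ℂ) (w t) := by
      rw [map_sum, Finset.sum_mul_sum]
    calc Complex.normSq (∑ t ∈ M, w t)
        = ((∑ s ∈ M, w s) * (starRingEnd ℂ) (∑ t ∈ M, w t)).re := by
          rw [Complex.mul_conj]; simp
      _ = ∑ s ∈ M, ∑ t ∈ M, h s t := by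
          rw [this, Complex.re_sum]
          exact Finset.sum_congr rfl fun s _ => by rw [Complex.re_sum]
  -- Step A : rewrite LHS over full powerset
  have stepA : ∑ M ∈ (Finset.univ : Finset (Fin T)).powerset.filter (fun M => M.Nonempty),
        p ^ M.card * (1 - p) ^ (T - M.card) *
          ‖(∑ t ∈ M, z t) / (M.card : ℂ) - μ‖ ^ 2
      = ∑ M ∈ (Finset.univ : Finset (Fin T)).powerset,
          K M.card * ∑ s ∈ M, ∑ t ∈ M, h s t := by
    rw [Finset.sum_filter]
    refine Finset.sum_congr rfl fun M _ => ?_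
    by_cases hM : M.Nonempty
    · rw [if_pos hM]
      have hc0 : (M.card : ℂ) ≠ 0 := by
        simp only [ne_eq, Nat.cast_eq_zero]
        exact Finset.card_ne_zero_of_mem hM.choose_spec
      have hmean : (∑ t ∈ M, z t) / (M.card : ℂ) - μ = (∑ t ∈ M, w t) / (M.card : ℂ) := by
        rw [eq_div_iff hc0, sub_mul, div_mul_cancel₀ _ hc0]
        simp only [hwdef, Finset.sum_sub_distrib, Finset.sum_const, nsmul_eq_mul]
        ring
      rw [hmean, Complex.sq_norm, Complex.normSq_div, hns, Complex.normSq_natCast, hKdef]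
      have : ((M.card : ℝ)) * (M.card : ℝ) = (M.card : ℝ) ^ 2 := by ring
      rw [this]
      ring
    · rw [if_neg hM]
      rw [Finset.not_nonempty_iff_eq_empty] at hM
      subst hM
      simp
  rw [stepA]
  -- Step B : swap sums
  have stepB : ∑ M ∈ (Finset.univ : Finset (Fin T)).powerset,
        K M.card * ∑ s ∈ M, ∑ t ∈ M, h s t
      = ∑ s : Fin T, ∑ t : Fin T, h s t *
          ∑ M ∈ (Finset.univ : Finset (Fin T)).powerset,
            (if s ∈ M ∧ t ∈ M then K M.card else 0) := by
    calc ∑ M ∈ (Finset.univ : Finset (Fin T)).powerset,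
          K M.card * ∑ s ∈ M, ∑ t ∈ M, h s t
        = ∑ M ∈ (Finset.univ : Finset (Fin T)).powerset,
            ∑ s ∈ M, ∑ t ∈ M, h s t * K M.card := by
          refine Finset.sum_congr rfl fun M _ => ?_
          rw [mul_comm, Finset.sum_mul]
          exact Finset.sum_congr rfl fun s _ => by rw [Finset.sum_mul]
      _ = ∑ s : Fin T, ∑ M ∈ (Finset.univ : Finset (Fin T)).powerset,
            (if s ∈ M then ∑ t ∈ M, h s t * K M.card else 0) :=
          swap_aux (fun M s => ∑ t ∈ M, h s t * K M.card)
      _ = ∑ s : Fin T, ∑ M ∈ (Finset.univ : Finset (Fin T)).powerset,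
            ∑ t ∈ M, (if s ∈ M then h s t * K M.card else 0) := by
          exact Finset.sum_congr rfl fun s _ => Finset.sum_congr rfl fun M _ =>
            _root_.ite_sum_zero _ _ _
      _ = ∑ s : Fin T, ∑ t : Fin T, ∑ M ∈ (Finset.univ : Finset (Fin T)).powerset,
            (if t ∈ M then (if s ∈ M then h s t * K M.card else 0) else 0) := by
          exact Finset.sum_congr rfl fun s _ =>
            swap_aux (fun M t => if s ∈ M then h s t * K M.card else 0)
      _ = ∑ s : Fin T, ∑ t : Fin T, h s t *
            ∑ M ∈ (Finset.univ : Finset (Fin T)).powerset,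
              (if s ∈ M ∧ t ∈ M then K M.card else 0) := by
          refine Finset.sum_congr rfl fun s _ => Finset.sum_congr rfl fun t _ => ?_
          rw [Finset.mul_sum]
          refine Finset.sum_congr rfl fun M _ => ?_
          by_cases h1 : s ∈ M <;> by_cases h2 : t ∈ M <;> simp [h1, h2]
  rw [stepB]
  -- the two coefficient values
  have hAval : ∀ s : Fin T,
      (∑ M ∈ (Finset.univ : Finset (Fin T)).powerset,
        (if s ∈ M ∧ s ∈ M then K M.card else 0))
      = ∑ n ∈ Finset.Icc 1 T,
          p ^ n * (1 - p) ^ (T - n) * ((T - 1).choose (n - 1) : ℝ) / (n ^ 2 : ℝ) := by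
    intro s
    have h1 : ∀ M : Finset (Fin T),
        (if s ∈ M ∧ s ∈ M then K M.card else 0) = (if {s} ⊆ M then K M.card else 0) := by
      intro M; refine if_congr ?_ rfl rfl; simp
    rw [Finset.sum_congr rfl fun M _ => h1 M, count_aux {s} K]
    simp only [Fintype.card_fin, card_singleton]
    refine Finset.sum_nbij' (fun j => j + 1) (fun n => n - 1) ?_ ?_ ?_ ?_ ?_
    · intro a ha; simp only [mem_range] at ha; simp only [mem_Icc]; omega
    · intro a ha; simp only [mem_Icc] at ha; simp only [mem_range]; omega
    · intro a ha; show a + 1 - 1 = a; omega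
    · intro a ha; simp only [mem_Icc] at ha; show a - 1 + 1 = a; omega
    · intro a ha
      simp only [hKdef, Nat.add_sub_cancel]
      push_cast
      ring
  have hBval : ∀ s t : Fin T, s ≠ t →
      (∑ M ∈ (Finset.univ : Finset (Fin T)).powerset,
        (if s ∈ M ∧ t ∈ M then K M.card else 0))
      = ∑ n ∈ Finset.Icc 2 T,
          p ^ n * (1 - p) ^ (T - n) * ((T - 2).choose (n - 2) : ℝ) / (n ^ 2 : ℝ) := by
    intro s t hst
    have h1 : ∀ M : Finset (Fin T),
        (if s ∈ M ∧ t ∈ M then K M.card else 0)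
          = (if ({s, t} : Finset (Fin T)) ⊆ M then K M.card else 0) := by
      intro M; refine if_congr ?_ rfl rfl
      rw [Finset.insert_subset_iff, Finset.singleton_subset_iff]
    rw [Finset.sum_congr rfl fun M _ => h1 M, count_aux {s, t} K]
    rw [Finset.card_pair hst]
    simp only [Fintype.card_fin]
    refine Finset.sum_nbij' (fun j => j + 2) (fun n => n - 2) ?_ ?_ ?_ ?_ ?_
    · intro a ha; simp only [mem_range] at ha; simp only [mem_Icc]; omega
    · intro a ha; simp only [mem_Icc] at ha; simp only [mem_range]; omega
    · intro a ha; show a + 2 - 2 = a; omega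
    · intro a ha; simp only [mem_Icc] at ha; show a - 2 + 2 = a; omega
    · intro a ha
      simp only [hKdef, Nat.add_sub_cancel]
      push_cast
      ring
  set A : ℝ := ∑ n ∈ Finset.Icc 1 T,
      p ^ n * (1 - p) ^ (T - n) * ((T - 1).choose (n - 1) : ℝ) / (n ^ 2 : ℝ) with hAdef
  set B : ℝ := ∑ n ∈ Finset.Icc 2 T,
      p ^ n * (1 - p) ^ (T - n) * ((T - 2).choose (n - 2) : ℝ) / (n ^ 2 : ℝ) with hBdef
  have hC : ∀ s t : Fin T,
      (∑ M ∈ (Finset.univ : Finset (Fin T)).powerset,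
        (if s ∈ M ∧ t ∈ M then K M.card else 0)) = if s = t then A else B := by
    intro s t
    by_cases hst : s = t
    · subst hst; rw [if_pos rfl]; exact hAval s
    · rw [if_neg hst]; exact hBval s t hst
  rw [Finset.sum_congr rfl fun s _ => Finset.sum_congr rfl fun t _ => by rw [hC s t]]
  -- final assembly
  have hdiag : ∀ s : Fin T, h s s = ‖z s - μ‖ ^ 2 := by
    intro s
    simp only [hhdef, Complex.mul_conj]
    rw [Complex.ofReal_re, ← Complex.sq_norm]
  have htot : ∑ s : Fin T, ∑ t : Fin T, h s t = 0 := by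
    have := hns Finset.univ
    rw [hsum] at this
    simp only [map_zero] at this
    exact this.symm
  calc ∑ s : Fin T, ∑ t : Fin T, h s t * (if s = t then A else B)
      = ∑ s : Fin T, ∑ t : Fin T,
          (h s t * B + if s = t then h s t * (A - B) else 0) := by
        refine Finset.sum_congr rfl fun s _ => Finset.sum_congr rfl fun t _ => ?_
        split_ifs with hst <;> ring
    _ = (∑ s : Fin T, ∑ t : Fin T, h s t) * B
          + ∑ s : Fin T, h s s * (A - B) := by
        rw [Finset.sum_mul]
        rw [← Finset.sum_add_distrib]
        refine Finset.sum_congr rfl fun s _ => ?_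
        rw [Finset.sum_add_distrib, Finset.sum_mul]
        congr 1
        rw [Finset.sum_ite_eq Finset.univ s (fun t => h s t * (A - B))]
        simp
    _ = (∑ t, ‖z t - μ‖ ^ 2) * (A - B) := by
        rw [htot, zero_mul, zero_add, ← Finset.sum_mul]
        congr 1
        exact Finset.sum_congr rfl fun s _ => hdiag s
end

section
/- Let T ≥ 2, let z : Fin T → ℂ with |z_t| = 1 for all t, let μ = (1/T)·Σ_t z_t, let p ∈ (0,1) and δ > 0. Then Σ over all nonempty subsets M ⊆ Fin T satisfying |(1/|M|)·Σ_{t∈M} z_t − μ| ≥ δ of p^{|M|}(1−p)^{T−|M|} ≤ (2/δ²) · Σ_{n=1}^{T} (p^n/n)·(1−p)^{T−n}·C(T, n). (Probabilistically: a Chebyshev-type bound on the probability that the sample mean over a p-random subset deviates from μ by at least δ.) -/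
open scoped Classical


lemma count_aux_s13 {α : Type*} [DecidableEq α] (s A : Finset α) (hA : A ⊆ s) (n : ℕ) :
    (((s.powersetCard (n + A.card)).filter (fun M => A ⊆ M)).card : ℕ)
      = (s.card - A.card).choose n := by
  rw [← Finset.card_sdiff_of_subset hA, ← Finset.card_powersetCard n (s \ A)]
  apply Finset.card_nbij' (fun M => M \ A) (fun N => N ∪ A)
  · intro M hM
    simp only [Finset.mem_coe, Finset.mem_filter, Finset.mem_powersetCard] at hM
    obtain ⟨⟨hMs, hMc⟩, hAM⟩ := hM
    rw [Finset.mem_coe, Finset.mem_powersetCard]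
    exact ⟨Finset.sdiff_subset_sdiff hMs (le_refl A),
      by rw [Finset.card_sdiff_of_subset hAM, hMc, Nat.add_sub_cancel]⟩
  · intro N hN
    rw [Finset.mem_coe, Finset.mem_powersetCard] at hN
    obtain ⟨hNs, hNc⟩ := hN
    have hd : Disjoint N A := Finset.disjoint_of_subset_left hNs Finset.sdiff_disjoint
    simp only [Finset.mem_coe, Finset.mem_filter, Finset.mem_powersetCard]
    refine ⟨⟨Finset.union_subset (hNs.trans Finset.sdiff_subset) hA, ?_⟩,
      Finset.subset_union_right⟩
    rw [Finset.card_union_of_disjoint hd, hNc]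
  · intro M hM
    simp only [Finset.mem_coe, Finset.mem_filter] at hM
    exact Finset.sdiff_union_of_subset hM.2
  · intro N hN
    rw [Finset.mem_coe, Finset.mem_powersetCard] at hN
    exact Finset.union_sdiff_cancel_right
      (Finset.disjoint_of_subset_left hN.1 Finset.sdiff_disjoint)

section counts
variable {α : Type*} [DecidableEq α] [Fintype α]

lemma count_diag (a : α) (n : ℕ) (hn : 1 ≤ n) :
    (((Finset.univ.powersetCard n).filter (fun M => a ∈ M)).card : ℕ)
      = (Fintype.card α - 1).choose (n - 1) := by
  obtain ⟨m, rfl⟩ := Nat.exists_eq_add_of_le' hn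
  have := count_aux_s13 (Finset.univ : Finset α) {a} (by simp) m
  simp only [Finset.card_singleton, Finset.singleton_subset_iff, Finset.card_univ] at this
  simpa using this

lemma count_pair (a b : α) (hab : a ≠ b) (n : ℕ) (hn : 2 ≤ n) :
    (((Finset.univ.powersetCard n).filter (fun M => a ∈ M ∧ b ∈ M)).card : ℕ)
      = (Fintype.card α - 2).choose (n - 2) := by
  obtain ⟨m, rfl⟩ := Nat.exists_eq_add_of_le' hn
  have hc : ({a, b} : Finset α).card = 2 := by
    rw [Finset.card_insert_of_notMem (by simpa using hab), Finset.card_singleton]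
  have := count_aux_s13 (Finset.univ : Finset α) {a, b} (by simp) m
  rw [hc, Finset.card_univ] at this
  rw [show m + 2 - 2 = m by omega, ← this]
  congr 2
  ext M
  simp [Finset.insert_subset_iff]

lemma count_pair_one (a b : α) (hab : a ≠ b) :
    ((Finset.univ.powersetCard 1).filter (fun M => a ∈ M ∧ b ∈ M)) = ∅ := by
  rw [Finset.filter_eq_empty_iff]
  intro M hM
  rw [Finset.mem_powersetCard] at hM
  obtain ⟨x, rfl⟩ := Finset.card_eq_one.mp hM.2
  simp only [Finset.mem_singleton]
  rintro ⟨rfl, rfl⟩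
  exact hab rfl
end counts

lemma real_var {α : Type*} [DecidableEq α] [Fintype α] (f : α → ℝ)
    (hf : ∑ t, f t = 0) (n : ℕ) (hn : 1 ≤ n) :
    ∑ M ∈ (Finset.univ : Finset α).powersetCard n, (∑ t ∈ M, f t) ^ 2
      ≤ ((Fintype.card α - 1).choose (n - 1) : ℝ) * ∑ t, (f t) ^ 2 := by
  classical
  set P := (Finset.univ : Finset α).powersetCard n with hP
  set c1 : ℝ := ((Fintype.card α - 1).choose (n - 1) : ℝ) with hc1
  set c2 : ℝ := (if n = 1 then 0 else ((Fintype.card α - 2).choose (n - 2) : ℝ)) with hc2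
  have hc2nn : 0 ≤ c2 := by
    rw [hc2]; split_ifs <;> positivity
  have key : ∀ s t : α,
      (((P.filter (fun M => s ∈ M ∧ t ∈ M)).card : ℝ)) = if s = t then c1 else c2 := by
    intro s t
    by_cases hst : s = t
    · subst hst
      simp only [and_self, if_true, eq_self_iff_true]
      rw [hc1]
      exact_mod_cast count_diag s n hn
    · rw [if_neg hst, hc2]
      rcases eq_or_lt_of_le hn with h1 | h2
      · rw [if_pos h1.symm, hP, ← h1, count_pair_one s t hst]
        simp
      · rw [if_neg (by omega), count_pair s t hst n h2]
  have step1 : ∑ M ∈ P, (∑ t ∈ M, f t) ^ 2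
      = ∑ s, ∑ t, (((P.filter (fun M => s ∈ M ∧ t ∈ M)).card : ℝ)) * (f s * f t) := by
    have hM : ∀ M ∈ P, (∑ t ∈ M, f t) ^ 2
        = ∑ s, ∑ t, ((if s ∈ M then f s else 0) * (if t ∈ M then f t else 0)) := by
      intro M _
      rw [sq, ← Finset.sum_mul_sum]
      congr 1 <;> rw [Finset.sum_ite_mem, Finset.univ_inter]
    rw [Finset.sum_congr rfl hM, Finset.sum_comm]
    refine Finset.sum_congr rfl fun s _ => ?_
    rw [Finset.sum_comm]
    refine Finset.sum_congr rfl fun t _ => ?_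
    have h1 : ∑ M ∈ P, ((if s ∈ M then f s else 0) * (if t ∈ M then f t else 0))
        = ∑ M ∈ P, (if s ∈ M ∧ t ∈ M then f s * f t else 0) :=
      Finset.sum_congr rfl fun M _ => by
        by_cases hs : s ∈ M <;> by_cases ht : t ∈ M <;> simp [hs, ht]
    rw [h1, ← Finset.sum_filter, Finset.sum_const, nsmul_eq_mul]
  have step2 : ∀ s t : α,
      (((P.filter (fun M => s ∈ M ∧ t ∈ M)).card : ℝ)) * (f s * f t)
        = c2 * (f s * f t) + (if s = t then (c1 - c2) * f s ^ 2 else 0) := by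
    intro s t
    rw [key s t]
    by_cases hst : s = t
    · subst hst
      rw [if_pos rfl, if_pos rfl, sq]
      ring
    · rw [if_neg hst, if_neg hst, add_zero]
  rw [step1]
  simp only [step2]
  have calc1 : ∑ s : α, ∑ t : α,
      (c2 * (f s * f t) + (if s = t then (c1 - c2) * f s ^ 2 else 0))
      = (c1 - c2) * ∑ t, f t ^ 2 := by
    simp only [Finset.sum_add_distrib]
    have e1 : ∑ s : α, ∑ t : α, c2 * (f s * f t) = 0 := by
      simp only [← Finset.mul_sum, hf, mul_zero, Finset.sum_const_zero]
    have e2 : ∑ s : α, ∑ t : α, (if s = t then (c1 - c2) * f s ^ 2 else 0)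
        = ∑ s : α, (c1 - c2) * f s ^ 2 := by
      refine Finset.sum_congr rfl fun s _ => ?_
      rw [Finset.sum_ite_eq]
      simp
    rw [e1, e2, zero_add, ← Finset.mul_sum]
  rw [calc1]
  have hsq : 0 ≤ ∑ t, f t ^ 2 := by positivity
  nlinarith [mul_nonneg hc2nn hsq]

lemma complex_var {α : Type*} [DecidableEq α] [Fintype α] (w : α → ℂ)
    (hw : ∑ t, w t = 0) (n : ℕ) (hn : 1 ≤ n) :
    ∑ M ∈ (Finset.univ : Finset α).powersetCard n, Complex.normSq (∑ t ∈ M, w t)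
      ≤ ((Fintype.card α - 1).choose (n - 1) : ℝ) * ∑ t, Complex.normSq (w t) := by
  have hns : ∀ x : ℂ, Complex.normSq x = x.re ^ 2 + x.im ^ 2 := fun x => by
    rw [Complex.normSq_apply, sq, sq]
  have hre : ∑ t, (w t).re = 0 := by rw [← Complex.re_sum, hw, Complex.zero_re]
  have him : ∑ t, (w t).im = 0 := by rw [← Complex.im_sum, hw, Complex.zero_im]
  calc ∑ M ∈ (Finset.univ : Finset α).powersetCard n, Complex.normSq (∑ t ∈ M, w t)
      = (∑ M ∈ (Finset.univ : Finset α).powersetCard n, (∑ t ∈ M, (w t).re) ^ 2)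
        + (∑ M ∈ (Finset.univ : Finset α).powersetCard n, (∑ t ∈ M, (w t).im) ^ 2) := by
        rw [← Finset.sum_add_distrib]
        refine Finset.sum_congr rfl fun M _ => ?_
        rw [hns, Complex.re_sum, Complex.im_sum]
    _ ≤ ((Fintype.card α - 1).choose (n - 1) : ℝ) * (∑ t, (w t).re ^ 2)
        + ((Fintype.card α - 1).choose (n - 1) : ℝ) * (∑ t, (w t).im ^ 2) :=
        add_le_add (real_var _ hre n hn) (real_var _ him n hn)
    _ = ((Fintype.card α - 1).choose (n - 1) : ℝ) * ∑ t, Complex.normSq (w t) := by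
        rw [← mul_add, ← Finset.sum_add_distrib]
        congr 1
        exact Finset.sum_congr rfl fun t _ => (hns (w t)).symm


/-- **Chebyshev-type bound for the sample mean over a `p`-random subset.**
For unimodular `z : Fin T → ℂ` with mean `μ`, `p ∈ (0,1)` and `δ > 0`, the
total weight of nonempty subsets `M` whose sample mean deviates from `μ` by at
least `δ` is at most `(2/δ²) Σ_{n=1}^T (p^n/n)(1−p)^{T−n} C(T,n)`. -/
theorem chebyshev_random_subset_bound (T : ℕ) (hT : 2 ≤ T) (z : Fin T → ℂ)
    (hz : ∀ t, ‖z t‖ = 1)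
    (μ : ℂ) (hμ : μ = (∑ t, z t) / (T : ℂ))
    (p : ℝ) (hp0 : 0 < p) (hp1 : p < 1) (δ : ℝ) (hδ : 0 < δ) :
    ∑ M ∈ (Finset.univ : Finset (Fin T)).powerset.filter
        (fun M => M.Nonempty ∧
          δ ≤ ‖(∑ t ∈ M, z t) / (M.card : ℂ) - μ‖),
        p ^ M.card * (1 - p) ^ (T - M.card)
      ≤ (2 / δ ^ 2) *
          ∑ n ∈ Finset.Icc 1 T, (p ^ n / n) * (1 - p) ^ (T - n) * (T.choose n : ℝ) := by
  have hT0 : (T : ℂ) ≠ 0 := by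
    simp only [Ne, Nat.cast_eq_zero]; omega
  set w : Fin T → ℂ := fun t => z t - μ with hwdef
  have hsz : ∑ t, z t = (T : ℂ) * μ := by
    rw [hμ, mul_div_cancel₀ _ hT0]
  have hw0 : ∑ t, w t = 0 := by
    simp only [hwdef, Finset.sum_sub_distrib, Finset.sum_const, Finset.card_univ,
      Fintype.card_fin, nsmul_eq_mul, hsz, sub_self]
  -- total variance bound
  have hS : ∑ t, Complex.normSq (w t) ≤ (T : ℝ) := by
    have h1 : ∀ t, Complex.normSq (w t)
        = 1 + Complex.normSq μ - 2 * (z t * (starRingEnd ℂ) μ).re := by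
      intro t
      rw [hwdef]
      simp only
      rw [Complex.normSq_sub, ← Complex.sq_norm (z t), hz t]
      ring
    have h2 : ∑ t, (z t * (starRingEnd ℂ) μ).re = (T : ℝ) * Complex.normSq μ := by
      rw [← Complex.re_sum, ← Finset.sum_mul, hsz, mul_assoc, Complex.mul_conj]
      simp
    rw [Finset.sum_congr rfl fun t _ => h1 t]
    simp only [Finset.sum_sub_distrib, Finset.sum_add_distrib, Finset.sum_const,
      Finset.card_univ, Fintype.card_fin, nsmul_eq_mul, ← Finset.mul_sum, h2]
    nlinarith [Complex.normSq_nonneg μ, Nat.cast_nonneg (α := ℝ) T]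
  have h1p : (0:ℝ) < 1 - p := by linarith
  set G' : Finset (Fin T) → ℝ := fun M =>
    if M.Nonempty then
      p ^ M.card * (1 - p) ^ (T - M.card)
        * Complex.normSq ((∑ t ∈ M, z t) / (M.card : ℂ) - μ)
    else 0 with hG'
  have hG'nn : ∀ M, 0 ≤ G' M := by
    intro M
    rw [hG']
    dsimp only
    split_ifs
    · exact mul_nonneg (mul_nonneg (pow_nonneg hp0.le _) (pow_nonneg h1p.le _))
        (Complex.normSq_nonneg _)
    · exact le_refl 0
  -- Markov / Chebyshev step
  have step1 : ∑ M ∈ (Finset.univ : Finset (Fin T)).powerset.filter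
        (fun M => M.Nonempty ∧
          δ ≤ ‖(∑ t ∈ M, z t) / (M.card : ℂ) - μ‖),
        p ^ M.card * (1 - p) ^ (T - M.card)
      ≤ (1 / δ ^ 2) * ∑ M ∈ (Finset.univ : Finset (Fin T)).powerset, G' M := by
    calc ∑ M ∈ (Finset.univ : Finset (Fin T)).powerset.filter
          (fun M => M.Nonempty ∧
            δ ≤ ‖(∑ t ∈ M, z t) / (M.card : ℂ) - μ‖),
          p ^ M.card * (1 - p) ^ (T - M.card)
        ≤ ∑ M ∈ (Finset.univ : Finset (Fin T)).powerset.filter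
          (fun M => M.Nonempty ∧
            δ ≤ ‖(∑ t ∈ M, z t) / (M.card : ℂ) - μ‖),
          (1 / δ ^ 2) * G' M := by
          refine Finset.sum_le_sum fun M hM => ?_
          rw [Finset.mem_filter] at hM
          obtain ⟨-, hne, hdev⟩ := hM
          rw [hG']
          dsimp only
          rw [if_pos hne]
          have hnsq : δ ^ 2 ≤ Complex.normSq ((∑ t ∈ M, z t) / (M.card : ℂ) - μ) := by
            rw [← Complex.sq_norm]
            exact pow_le_pow_left₀ hδ.le hdev 2
          have hwnn : 0 ≤ p ^ M.card * (1 - p) ^ (T - M.card) :=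
            mul_nonneg (pow_nonneg hp0.le _) (pow_nonneg h1p.le _)
          rw [one_div, inv_mul_eq_div, le_div_iff₀ (pow_pos hδ 2)]
          rw [mul_comm (p ^ M.card * (1 - p) ^ (T - M.card)) _, mul_comm _ _]
          exact mul_le_mul_of_nonneg_left hnsq hwnn
      _ ≤ ∑ M ∈ (Finset.univ : Finset (Fin T)).powerset, (1 / δ ^ 2) * G' M := by
          refine Finset.sum_le_sum_of_subset_of_nonneg (Finset.filter_subset _ _)
            fun M _ _ => mul_nonneg (by positivity) (hG'nn M)
      _ = (1 / δ ^ 2) * ∑ M ∈ (Finset.univ : Finset (Fin T)).powerset, G' M := by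
          rw [Finset.mul_sum]
  -- group by cardinality
  have hgroup : ∑ M ∈ (Finset.univ : Finset (Fin T)).powerset, G' M
      = ∑ n ∈ Finset.Icc 1 T, ∑ M ∈ (Finset.univ : Finset (Fin T)).powersetCard n, G' M := by
    rw [Finset.powerset_card_disjiUnion]; erw [Finset.sum_disjiUnion]; rw [Finset.card_univ,
      Fintype.card_fin]
    have hins : Finset.range (T + 1) = insert 0 (Finset.Icc 1 T) := by
      ext x
      simp only [Finset.mem_range, Finset.mem_insert, Finset.mem_Icc]
      omega
    rw [hins, Finset.sum_insert (by simp)]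
    rw [Finset.powersetCard_zero, Finset.sum_singleton]
    rw [show G' ∅ = 0 by rw [hG']; simp, zero_add]
  -- per cardinality bound
  have step3 : ∀ n ∈ Finset.Icc 1 T,
      ∑ M ∈ (Finset.univ : Finset (Fin T)).powersetCard n, G' M
        ≤ 2 * ((p ^ n / n) * (1 - p) ^ (T - n) * (T.choose n : ℝ)) := by
    intro n hn
    rw [Finset.mem_Icc] at hn
    obtain ⟨hn1, hnT⟩ := hn
    have hnC : (n : ℂ) ≠ 0 := by
      simp only [Ne, Nat.cast_eq_zero]; omega
    have hnR : (0:ℝ) < (n:ℝ) := by exact_mod_cast Nat.pos_of_ne_zero (by omega)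
    have hGM : ∀ M ∈ (Finset.univ : Finset (Fin T)).powersetCard n, G' M
        = p ^ n * (1 - p) ^ (T - n)
          * (Complex.normSq (∑ t ∈ M, w t) / (n : ℝ) ^ 2) := by
      intro M hM
      rw [Finset.mem_powersetCard] at hM
      have hcard : M.card = n := hM.2
      have hne : M.Nonempty := Finset.card_pos.mp (by omega)
      have hDM : (∑ t ∈ M, z t) / (M.card : ℂ) - μ = (∑ t ∈ M, w t) / (n : ℂ) := by
        rw [hcard, eq_div_iff hnC, sub_mul, div_mul_cancel₀ _ hnC, hwdef]
        simp only [Finset.sum_sub_distrib, Finset.sum_const, nsmul_eq_mul, hcard]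
        ring
      rw [hG']
      dsimp only
      rw [if_pos hne, hDM, hcard, Complex.normSq_div]
      congr 1
      rw [Complex.normSq_natCast, sq]
    rw [Finset.sum_congr rfl hGM]
    rw [← Finset.mul_sum, ← Finset.sum_div]
    -- variance bound
    have hid : (T : ℝ) * ((T - 1).choose (n - 1) : ℝ) = (n : ℝ) * (T.choose n : ℝ) := by
      have h := Nat.add_one_mul_choose_eq (T - 1) (n - 1)
      rw [Nat.sub_add_cancel (by omega : 1 ≤ T),
        Nat.sub_add_cancel hn1] at h
      exact_mod_cast by rw [h]; ring
    have hX : ∑ M ∈ (Finset.univ : Finset (Fin T)).powersetCard n,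
        Complex.normSq (∑ t ∈ M, w t) ≤ (n : ℝ) * (T.choose n : ℝ) := by
      calc ∑ M ∈ (Finset.univ : Finset (Fin T)).powersetCard n,
            Complex.normSq (∑ t ∈ M, w t)
          ≤ ((Fintype.card (Fin T) - 1).choose (n - 1) : ℝ)
              * ∑ t, Complex.normSq (w t) := complex_var w hw0 n hn1
        _ ≤ ((T - 1).choose (n - 1) : ℝ) * (T : ℝ) := by
            rw [Fintype.card_fin]
            exact mul_le_mul_of_nonneg_left hS (by positivity)
        _ = (n : ℝ) * (T.choose n : ℝ) := by rw [← hid]; ring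
    have hA : (0:ℝ) ≤ p ^ n * (1 - p) ^ (T - n) :=
      mul_nonneg (pow_nonneg hp0.le _) (pow_nonneg h1p.le _)
    calc p ^ n * (1 - p) ^ (T - n)
          * ((∑ M ∈ (Finset.univ : Finset (Fin T)).powersetCard n,
              Complex.normSq (∑ t ∈ M, w t)) / (n : ℝ) ^ 2)
        ≤ p ^ n * (1 - p) ^ (T - n) * (((n : ℝ) * (T.choose n : ℝ)) / (n : ℝ) ^ 2) := by
          gcongr
      _ = (p ^ n / n) * (1 - p) ^ (T - n) * (T.choose n : ℝ) := by
          field_simp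
      _ ≤ 2 * ((p ^ n / n) * (1 - p) ^ (T - n) * (T.choose n : ℝ)) := by
          have : (0:ℝ) ≤ (p ^ n / n) * (1 - p) ^ (T - n) * (T.choose n : ℝ) := by positivity
          linarith
  -- assemble
  calc ∑ M ∈ (Finset.univ : Finset (Fin T)).powerset.filter
        (fun M => M.Nonempty ∧
          δ ≤ ‖(∑ t ∈ M, z t) / (M.card : ℂ) - μ‖),
        p ^ M.card * (1 - p) ^ (T - M.card)
      ≤ (1 / δ ^ 2) * ∑ M ∈ (Finset.univ : Finset (Fin T)).powerset, G' M := step1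
    _ = (1 / δ ^ 2) * ∑ n ∈ Finset.Icc 1 T,
          ∑ M ∈ (Finset.univ : Finset (Fin T)).powersetCard n, G' M := by rw [hgroup]
    _ ≤ (1 / δ ^ 2) * ∑ n ∈ Finset.Icc 1 T,
          2 * ((p ^ n / n) * (1 - p) ^ (T - n) * (T.choose n : ℝ)) :=
        mul_le_mul_of_nonneg_left (Finset.sum_le_sum step3) (by positivity)
    _ = (2 / δ ^ 2) *
          ∑ n ∈ Finset.Icc 1 T, (p ^ n / n) * (1 - p) ^ (T - n) * (T.choose n : ℝ) := by
        rw [← Finset.mul_sum]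
        ring
end

section
/- For every T ≥ 1 and every real number p: Σ_{n=1}^{T} (p^n/n)·(1−p)^{T−n}·C(T,n) = Σ_{n=0}^{T−1} ((1−p)^{T−n−1} − (1−p)^{T})/(n+1), where C(T,n) denotes the binomial coefficient. -/
lemma icc_to_range (S : ℕ) (f : ℕ → ℝ) :
    ∑ n ∈ Finset.Icc 1 S, f n = ∑ m ∈ Finset.range S, f (m + 1) := by
  rw [← Finset.Ico_add_one_right_eq_Icc, Finset.sum_Ico_eq_sum_range]
  simp [add_comm]

lemma lhs_succ (T : ℕ) (p : ℝ) :
    ∑ n ∈ Finset.Icc 1 (T+1), (p ^ n / n) * (1 - p) ^ (T + 1 - n) * ((T+1).choose n : ℝ)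
    = (1 - p) * ∑ n ∈ Finset.Icc 1 T, (p ^ n / n) * (1 - p) ^ (T - n) * (T.choose n : ℝ)
      + (1 - (1 - p) ^ (T+1)) / (T+1) := by
  set q := 1 - p with hq
  rw [icc_to_range, icc_to_range]
  have key : ∀ m ∈ Finset.range (T+1),
      (p ^ (m+1) / (m+1 : ℕ)) * q ^ (T + 1 - (m+1)) * (((T+1).choose (m+1) : ℕ) : ℝ)
      = (p ^ (m+1) / (m+1 : ℕ)) * q ^ (T - m) * (T.choose (m+1) : ℝ)
        + p ^ (m+1) * q ^ (T - m) * ((T+1).choose (m+1) : ℝ) / (T+1) := by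
    intro m hm
    have h1 : T + 1 - (m+1) = T - m := by omega
    have h2 : ((T+1).choose (m+1) : ℝ) = (T.choose m : ℝ) + (T.choose (m+1) : ℝ) := by
      rw [Nat.choose_succ_succ]; push_cast; ring
    have h3 : ((T+1 : ℕ) : ℝ) * (T.choose m : ℝ) = ((T+1).choose (m+1) : ℝ) * ((m+1 : ℕ) : ℝ) := by
      rw [← Nat.cast_mul, ← Nat.cast_mul, Nat.add_one_mul_choose_eq]
    have hm1 : ((m+1 : ℕ) : ℝ) ≠ 0 := by positivity
    have hT1 : ((T+1 : ℕ) : ℝ) ≠ 0 := by positivity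
    rw [h1, h2]
    have h4 : (T.choose m : ℝ) / ((m+1 : ℕ) : ℝ) = (((T+1).choose (m+1) : ℕ) : ℝ) / ((T+1 : ℕ) : ℝ) := by
      rw [div_eq_div_iff hm1 hT1]
      push_cast at h3 ⊢
      linarith
    have expand : (p ^ (m+1) / ((m+1:ℕ):ℝ)) * q ^ (T - m) * ((T.choose m : ℝ) + (T.choose (m+1) : ℝ))
        = p ^ (m+1) * q ^ (T-m) * ((T.choose m : ℝ) / ((m+1:ℕ):ℝ))
          + (p ^ (m+1) / ((m+1:ℕ):ℝ)) * q ^ (T-m) * (T.choose (m+1) : ℝ) := by ring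
    rw [expand, h4]
    push_cast
    push_cast at h2
    linear_combination (p * p ^ m * (1 - p) ^ (T - m) / (1 + (T:ℝ))) * h2
  rw [Finset.sum_congr rfl key, Finset.sum_add_distrib]
  congr 1
  · -- first piece equals q * old sum
    rw [Finset.sum_range_succ, Nat.choose_succ_self]
    simp only [Nat.cast_zero, mul_zero, add_zero]
    rw [Finset.mul_sum]
    apply Finset.sum_congr rfl
    intro m hm
    have hmT : m < T := Finset.mem_range.mp hm
    have : T - m = (T - (m+1)) + 1 := by omega
    rw [this, pow_succ]
    ring
  · -- second piece: binomial theorem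
    have hb : (p + q) ^ (T+1) = ∑ k ∈ Finset.range (T+2), p ^ k * q ^ (T+1-k) * ((T+1).choose k : ℝ) :=
      add_pow p q (T+1)
    have hpq : p + q = 1 := by rw [hq]; ring
    have hsum : ∑ k ∈ Finset.range (T+2), p ^ k * q ^ (T+1-k) * ((T+1).choose k : ℝ) = 1 := by
      rw [← hb, hpq, one_pow]
    rw [Finset.sum_range_succ'] at hsum
    simp only [pow_zero, Nat.choose_zero_right, Nat.cast_one, one_mul, mul_one,
      Nat.sub_zero] at hsum
    have hsum2 : ∑ m ∈ Finset.range (T+1), p ^ (m+1) * q ^ (T - m) * (((T+1).choose (m+1) : ℕ) : ℝ)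
        = 1 - q ^ (T+1) := by
      have he : ∀ m ∈ Finset.range (T+1),
          p ^ (m+1) * q ^ (T + 1 - (m+1)) * (((T+1).choose (m+1) : ℕ) : ℝ)
          = p ^ (m+1) * q ^ (T - m) * (((T+1).choose (m+1) : ℕ) : ℝ) := by
        intro m hm
        have : T + 1 - (m+1) = T - m := by omega
        rw [this]
      rw [Finset.sum_congr rfl he] at hsum
      linarith
    rw [← Finset.sum_div, hsum2]

/-- **A weighted binomial sum identity.**
For every `T ≥ 1` and real `p`:
`Σ_{n=1}^T (p^n/n)(1−p)^{T−n} C(T,n) = Σ_{n=0}^{T−1} ((1−p)^{T−n−1} − (1−p)^T)/(n+1)`. -/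
theorem weighted_binomial_sum_identity (T : ℕ) (hT : 1 ≤ T) (p : ℝ) :
    ∑ n ∈ Finset.Icc 1 T, (p ^ n / n) * (1 - p) ^ (T - n) * (T.choose n : ℝ)
      = ∑ n ∈ Finset.range T, ((1 - p) ^ (T - n - 1) - (1 - p) ^ T) / (n + 1) := by
  induction T, hT using Nat.le_induction with
  | base => norm_num
  | succ T hT ih =>
    rw [lhs_succ, ih]
    rw [Finset.sum_range_succ]
    have hlast : T + 1 - T - 1 = 0 := by omega
    rw [hlast, pow_zero]
    rw [Finset.mul_sum]
    have : ∀ m ∈ Finset.range T,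
        (1 - p) * (((1-p) ^ (T - m - 1) - (1-p) ^ T) / (m + 1))
        = ((1-p) ^ (T + 1 - m - 1) - (1-p) ^ (T+1)) / (m + 1) := by
      intro m hm
      have hmT : m < T := Finset.mem_range.mp hm
      have h1 : T + 1 - m - 1 = (T - m - 1) + 1 := by omega
      rw [h1, pow_succ, pow_succ]
      ring
    rw [Finset.sum_congr rfl this]
end

section
/- Let T ≥ 1, let p ∈ (0,1), and let s be a natural number with 1 ≤ s ≤ T. Then Σ_{n=1}^{T} (p^n/n)·(1−p)^{T−n}·C(T,n) ≤ s·(1−p)^{T−s} + 1/(s·p), where C(T,n) denotes the binomial coefficient. -/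
open Finset

lemma auxA (x : ℝ) (T : ℕ) :
    ∑ k ∈ range (T + 1), ((T + 1).choose (k + 1) : ℝ) * x ^ (k + 1)
      = (1 + x) ^ (T + 1) - 1 := by
  have h := add_pow x 1 (T + 1)
  rw [Finset.sum_range_succ'] at h
  simp only [one_pow, mul_one, pow_zero, Nat.choose_zero_right, Nat.cast_one, one_mul] at h
  have hx : (x + 1) ^ (T + 1) = (1 + x) ^ (T + 1) := by ring
  rw [hx] at h
  rw [h, add_sub_cancel_right]
  exact Finset.sum_congr rfl fun k _ => mul_comm _ _

lemma auxB (x : ℝ) (T : ℕ) :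
    ∑ k ∈ range (T + 1), (T.choose k : ℝ) * x ^ (k + 1) / (k + 1)
      = ((1 + x) ^ (T + 1) - 1) / (T + 1) := by
  rw [← auxA x T, Finset.sum_div]
  refine Finset.sum_congr rfl fun k _ => ?_
  have h := Nat.add_one_mul_choose_eq T k
  have h' : ((T : ℝ) + 1) * (T.choose k : ℝ) = ((T + 1).choose (k + 1) : ℝ) * ((k : ℝ) + 1) := by
    exact_mod_cast congrArg (Nat.cast : ℕ → ℝ) h
  have hk : (k : ℝ) + 1 ≠ 0 := by positivity
  have hT : (T : ℝ) + 1 ≠ 0 := by positivity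
  push_cast
  field_simp
  linear_combination x ^ (k + 1) * h'

lemma aux1 (x : ℝ) (T : ℕ) :
    ∑ k ∈ range T, (T.choose (k + 1) : ℝ) * x ^ (k + 1) / (k + 1)
      = ∑ j ∈ range T, ((1 + x) ^ (j + 1) - 1) / (j + 1) := by
  induction T with
  | zero => simp
  | succ T ih =>
    rw [Finset.sum_range_succ ((fun j => ((1 + x) ^ (j + 1) - 1) / (j + 1)))]
    rw [← ih]
    have step : ∀ k ∈ range (T + 1), ((T + 1).choose (k + 1) : ℝ) * x ^ (k + 1) / (k + 1)
        = (T.choose k : ℝ) * x ^ (k + 1) / (k + 1) + (T.choose (k + 1) : ℝ) * x ^ (k + 1) / (k + 1) := by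
      intro k _
      rw [Nat.choose_succ_succ]
      push_cast
      ring
    rw [Finset.sum_congr rfl step, Finset.sum_add_distrib, auxB]
    rw [Finset.sum_range_succ (fun k => (T.choose (k + 1) : ℝ) * x ^ (k + 1) / (k + 1))]
    simp [Nat.choose_succ_self]
    push_cast
    ring


/-- **Tail estimate for the weighted binomial sum.**
For `T ≥ 1`, `p ∈ (0,1)` and `1 ≤ s ≤ T`:
`Σ_{n=1}^T (p^n/n)(1−p)^{T−n} C(T,n) ≤ s (1−p)^{T−s} + 1/(s p)`. -/
theorem weighted_binomial_sum_tail_bound (T : ℕ) (hT : 1 ≤ T)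
    (p : ℝ) (hp0 : 0 < p) (hp1 : p < 1)
    (s : ℕ) (hs1 : 1 ≤ s) (hs2 : s ≤ T) :
    ∑ n ∈ Finset.Icc 1 T, (p ^ n / n) * (1 - p) ^ (T - n) * (T.choose n : ℝ)
      ≤ (s : ℝ) * (1 - p) ^ (T - s) + 1 / (s * p) := by
  have hq0 : (0:ℝ) < 1 - p := by linarith
  have hq1 : (1:ℝ) - p ≤ 1 := by linarith
  set x : ℝ := p / (1 - p) with hxdef
  have e1 : ∑ n ∈ Finset.Icc 1 T, (p ^ n / n) * (1 - p) ^ (T - n) * (T.choose n : ℝ)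
      = ∑ k ∈ range T, (p ^ (k+1) / (k+1)) * (1 - p) ^ (T - (k+1)) * (T.choose (k+1) : ℝ) := by
    rw [← Finset.Ico_add_one_right_eq_Icc, Finset.sum_Ico_eq_sum_range]
    refine Finset.sum_congr rfl fun k _ => ?_
    rw [Nat.add_comm 1 k]
    push_cast
    ring
  have e2 : ∀ k ∈ range T, (p ^ (k+1) / (k+1)) * (1 - p) ^ (T - (k+1)) * (T.choose (k+1) : ℝ)
      = (1 - p) ^ T * ((T.choose (k+1) : ℝ) * x ^ (k+1) / (k+1)) := by
    intro k hk
    have hkT : k + 1 ≤ T := Finset.mem_range.mp hk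
    have hpow : (1 - p) ^ (T - (k+1)) * (1 - p) ^ (k+1) = (1 - p) ^ T := by
      rw [← pow_add, Nat.sub_add_cancel hkT]
    have hx : x ^ (k+1) = p ^ (k+1) / (1 - p) ^ (k+1) := by rw [hxdef, div_pow]
    have h1 : ((1 - p) ^ (k+1)) ≠ 0 := by positivity
    have h2 : ((k:ℝ) + 1) ≠ 0 := by positivity
    rw [hx, ← hpow]
    push_cast
    field_simp
  rw [e1, Finset.sum_congr rfl e2, ← Finset.mul_sum, aux1]
  have hx1 : 1 + x = 1 / (1 - p) := by rw [hxdef]; field_simp; ring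
  rw [hx1]
  have e3 : (1 - p) ^ T * ∑ j ∈ range T, ((1 / (1 - p)) ^ (j + 1) - 1) / (j + 1)
      ≤ ∑ j ∈ range T, (1 - p) ^ (T - (j+1)) / (j+1) := by
    rw [Finset.mul_sum]
    refine Finset.sum_le_sum fun j hj => ?_
    have hjT : j + 1 ≤ T := Finset.mem_range.mp hj
    have hpow : (1 - p) ^ (T - (j+1)) * (1 - p) ^ (j+1) = (1 - p) ^ T := by
      rw [← pow_add, Nat.sub_add_cancel hjT]
    have h2 : (0:ℝ) < (j:ℝ) + 1 := by positivity
    have key : (1 - p) ^ T * ((1 / (1 - p)) ^ (j + 1) - 1)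
        = (1 - p) ^ (T - (j+1)) - (1 - p) ^ T := by
      rw [div_pow, one_pow]
      field_simp
      linear_combination -hpow
    push_cast
    rw [← mul_div_assoc, key]
    have hTp : (0:ℝ) ≤ (1 - p) ^ T := by positivity
    gcongr
    linarith
  refine e3.trans ?_
  have hsplit : ∑ j ∈ range T, (1 - p) ^ (T - (j+1)) / ((j:ℝ)+1)
      = ∑ j ∈ range s, (1 - p) ^ (T - (j+1)) / ((j:ℝ)+1)
        + ∑ j ∈ Ico s T, (1 - p) ^ (T - (j+1)) / ((j:ℝ)+1) := by
    rw [Finset.range_eq_Ico, Finset.range_eq_Ico]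
    exact (Finset.sum_Ico_consecutive _ (Nat.zero_le s) hs2).symm
  rw [hsplit]
  have head : ∑ j ∈ range s, (1 - p) ^ (T - (j+1)) / ((j:ℝ)+1) ≤ (s:ℝ) * (1 - p) ^ (T - s) := by
    calc ∑ j ∈ range s, (1 - p) ^ (T - (j+1)) / ((j:ℝ)+1)
        ≤ ∑ j ∈ range s, (1 - p) ^ (T - s) := by
          refine Finset.sum_le_sum fun j hj => ?_
          have hjs : j + 1 ≤ s := Finset.mem_range.mp hj
          have h1 : (1 - p) ^ (T - (j+1)) ≤ (1 - p) ^ (T - s) := by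
            apply pow_le_pow_of_le_one (le_of_lt hq0) hq1
            omega
          have h0 : (0:ℝ) ≤ (1 - p) ^ (T - (j+1)) := by positivity
          calc (1 - p) ^ (T - (j+1)) / ((j:ℝ)+1) ≤ (1 - p) ^ (T - (j+1)) := by
                apply div_le_self h0
                have : (0:ℝ) ≤ (j:ℝ) := Nat.cast_nonneg j
                linarith
            _ ≤ (1 - p) ^ (T - s) := h1
      _ = (s:ℝ) * (1 - p) ^ (T - s) := by
          rw [Finset.sum_const, Finset.card_range, nsmul_eq_mul]
  have tail : ∑ j ∈ Ico s T, (1 - p) ^ (T - (j+1)) / ((j:ℝ)+1) ≤ 1 / ((s:ℝ) * p) := by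
    have hs0 : (0:ℝ) < (s:ℝ) := by exact_mod_cast hs1
    have step1 : ∑ j ∈ Ico s T, (1 - p) ^ (T - (j+1)) / ((j:ℝ)+1)
        ≤ ∑ j ∈ Ico s T, (1 - p) ^ (T - (j+1)) / (s:ℝ) := by
      refine Finset.sum_le_sum fun j hj => ?_
      have hsj : s ≤ j := (Finset.mem_Ico.mp hj).1
      have : (s:ℝ) ≤ (j:ℝ) + 1 := by
        have : (s:ℝ) ≤ (j:ℝ) := by exact_mod_cast hsj
        linarith
      have h0 : (0:ℝ) ≤ (1 - p) ^ (T - (j+1)) := by positivity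
      exact div_le_div_of_nonneg_left h0 hs0 this
    have hgeom : ∑ i ∈ range T, (1 - p) ^ i ≤ 1 / p := by
      rw [geom_sum_eq (by intro h; rw [sub_eq_iff_eq_add] at h; simp at h; linarith : (1:ℝ) - p ≠ 1)]
      have he : ((1 - p) ^ T - 1) / (1 - p - 1) = (1 - (1 - p) ^ T) / p := by
        rw [show (1:ℝ) - p - 1 = -p by ring, div_neg]
        field_simp
        ring
      rw [he]
      have hTp : (0:ℝ) ≤ (1 - p) ^ T := by positivity
      gcongr
      linarith
    have himg : ∑ j ∈ Ico s T, (1 - p) ^ (T - (j+1)) ≤ ∑ i ∈ range T, (1 - p) ^ i := by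
      have inj : ∀ a ∈ Ico s T, ∀ b ∈ Ico s T, T - (a+1) = T - (b+1) → a = b := by
        intro a ha b hb h
        have ha' := Finset.mem_Ico.mp ha
        have hb' := Finset.mem_Ico.mp hb
        omega
      rw [← Finset.sum_image inj]
      refine Finset.sum_le_sum_of_subset_of_nonneg ?_ (fun i _ _ => by positivity)
      intro i hi
      rcases Finset.mem_image.mp hi with ⟨j, hj, rfl⟩
      have hj' := Finset.mem_Ico.mp hj
      exact Finset.mem_range.mpr (by omega)
    calc ∑ j ∈ Ico s T, (1 - p) ^ (T - (j+1)) / ((j:ℝ)+1)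
        ≤ ∑ j ∈ Ico s T, (1 - p) ^ (T - (j+1)) / (s:ℝ) := step1
      _ = (∑ j ∈ Ico s T, (1 - p) ^ (T - (j+1))) / (s:ℝ) := by rw [Finset.sum_div]
      _ ≤ (1 / p) / (s:ℝ) := by
          gcongr
          exact himg.trans hgeom
      _ = 1 / ((s:ℝ) * p) := by
          rw [div_div, one_div, one_div, mul_comm]
  linarith
end
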